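/- arXiv:2411.14382 — 11 statements merged into one kernel-verified Lean document; each statement's English description precedes it below -/
import Mathlib

section
/- For every memory kernel M of class C² on [0,∞) and every real number λ, there exists a unique continuously differentiable function x : [0,∞) → ℝ satisfying x(0) = 1 and x'(t) + λ·x(t) + ∫₀ᵗ M(t−s)·x(s) ds = 0 for all t ≥ 0. -/
noncomputable section
open Set intervalIntegral Real MeasureTheory

namespace MemAux
variable (M : ℝ → ℝ) (lam : ℝ)
def Mt : ℝ → ℝ := fun r => M (max r 0)
def conv (x : ℝ → ℝ) : ℝ → ℝ := fun s => ∫ u in (0:ℝ)..s, Mt M (s - u) * x u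
def J (x : ℝ → ℝ) : ℝ → ℝ := fun s => lam * x s + conv M x s
def IntEq (x : ℝ → ℝ) (T : ℝ) : Prop :=
  ∀ t ∈ Icc (0:ℝ) T, x t = 1 - ∫ s in (0:ℝ)..t, J M lam x s
variable {M}
theorem cont_conv (hMt : Continuous (Mt M)) {x : ℝ → ℝ} (hx : Continuous x) :
    Continuous (conv M x) := by
  have h : Continuous (Function.uncurry fun s u => Mt M (s - u) * x u) :=
    (hMt.comp (continuous_fst.sub continuous_snd)).mul (hx.comp continuous_snd)
  exact continuous_parametric_intervalIntegral_of_continuous h continuous_id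
theorem cont_J (hMt : Continuous (Mt M)) {x : ℝ → ℝ} (hx : Continuous x) :
    Continuous (J M lam x) :=
  (continuous_const.mul hx).add (cont_conv hMt hx)
def clampMap (T : ℝ) (hT : 0 ≤ T) : C(ℝ, Icc (0:ℝ) T) :=
  ⟨fun t => ⟨max 0 (min t T), le_max_left _ _, max_le hT (min_le_right _ _)⟩,
    Continuous.subtype_mk (continuous_const.max (continuous_id.min continuous_const)) _⟩
def clampBCF (g : ℝ → ℝ) (hg : Continuous g) (T : ℝ) (hT : 0 ≤ T) :
    BoundedContinuousFunction ℝ ℝ :=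
  (BoundedContinuousFunction.mkOfCompact
    ⟨fun t : Icc (0:ℝ) T => g t, hg.comp continuous_subtype_val⟩).compContinuous (clampMap T hT)
@[simp] theorem clampBCF_apply (g : ℝ → ℝ) (hg : Continuous g) (T : ℝ) (hT : 0 ≤ T) (t : ℝ) :
    clampBCF g hg T hT t = g (max 0 (min t T)) := rfl
theorem clamp_eq {T t : ℝ} (h0 : 0 ≤ t) (hT : t ≤ T) : max 0 (min t T) = t := by
  rw [min_eq_left hT, max_eq_right h0]
theorem exp_integral {L : ℝ} (hL : 0 < L) (b : ℝ) :
    ∫ u in (0:ℝ)..b, exp (L * u) = (exp (L * b) - 1) / L := by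
  have h : ∀ u : ℝ, HasDerivAt (fun v => exp (L * v) / L) (exp (L * u)) u := by
    intro u
    have h1 : HasDerivAt (fun v => exp (L * v)) (exp (L * u) * L) u := by
      simpa [Function.comp_def] using (Real.hasDerivAt_exp (L * u)).comp u ((hasDerivAt_id u).const_mul L)
    have := h1.div_const L
    simpa [mul_div_assoc, mul_div_cancel_right₀ _ hL.ne'] using this
  rw [intervalIntegral.integral_eq_sub_of_hasDerivAt (fun u _ => h u)
    ((Real.continuous_exp.comp (continuous_const.mul continuous_id)).intervalIntegrable 0 b)]
  simp [sub_div]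

theorem key (hMt : Continuous (Mt M)) (T : ℝ) (hT : 0 ≤ T) :
    (∃ x : ℝ → ℝ, Continuous x ∧ IntEq M lam x T) ∧
    (∀ x₁ x₂ : ℝ → ℝ, Continuous x₁ → Continuous x₂ → IntEq M lam x₁ T → IntEq M lam x₂ T →
      EqOn x₁ x₂ (Icc 0 T)) := by
  obtain ⟨C, hC⟩ : ∃ C, ∀ r ∈ Icc (0:ℝ) T, |Mt M r| ≤ C := by
    obtain ⟨C, hC⟩ := isCompact_Icc.exists_bound_of_continuousOn (hMt.continuousOn (s := Icc 0 T))
    exact ⟨C, fun r hr => hC r hr⟩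
  have hC0 : 0 ≤ C := le_trans (abs_nonneg _) (hC 0 ⟨le_refl _, hT⟩)
  have habs : 0 ≤ |lam| := abs_nonneg lam
  set L : ℝ := 2 * (|lam| + C + 1) with hLdef
  have hL1 : 1 ≤ L := by nlinarith
  have hL0 : 0 < L := lt_of_lt_of_le one_pos hL1
  have hexp_cont : ∀ f : BoundedContinuousFunction ℝ ℝ,
      Continuous fun u => exp (L * u) * f u := fun f =>
    (Real.continuous_exp.comp (continuous_const.mul continuous_id)).mul f.continuous
  have contg : ∀ f : BoundedContinuousFunction ℝ ℝ, Continuous fun t =>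
      exp (-(L * t)) * (1 - ∫ s in (0:ℝ)..t, J M lam (fun u => exp (L * u) * f u) s) := by
    intro f
    have hJ : Continuous (J M lam fun u => exp (L * u) * f u) := cont_J lam hMt (hexp_cont f)
    exact (Real.continuous_exp.comp (continuous_const.mul continuous_id).neg).mul
      (continuous_const.sub (intervalIntegral.continuous_primitive
        (fun a b => hJ.intervalIntegrable a b) 0))
  set Φ : BoundedContinuousFunction ℝ ℝ → BoundedContinuousFunction ℝ ℝ := fun f =>
    clampBCF _ (contg f) T hT with hΦdef
  have hΦapp : ∀ (f : BoundedContinuousFunction ℝ ℝ) (t : ℝ),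
      Φ f t = exp (-(L * max 0 (min t T))) *
        (1 - ∫ s in (0:ℝ)..(max 0 (min t T)), J M lam (fun u => exp (L * u) * f u) s) :=
    fun f t => rfl
  -- contraction estimate
  have hbound : ∀ f g : BoundedContinuousFunction ℝ ℝ, ∀ t : ℝ,
      dist (Φ f t) (Φ g t) ≤ (1/2) * dist f g := by
    intro f g t
    set τ := max 0 (min t T) with hτdef
    have hτ0 : (0:ℝ) ≤ τ := le_max_left _ _
    have hτT : τ ≤ T := max_le hT (min_le_right _ _)
    set D := dist f g with hDdef
    have hD0 : 0 ≤ D := dist_nonneg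
    have hfg : ∀ u, |f u - g u| ≤ D := fun u => by
      rw [← Real.dist_eq]; exact BoundedContinuousFunction.dist_coe_le_dist u
    have hJf : Continuous (J M lam fun u => exp (L * u) * f u) := cont_J lam hMt (hexp_cont f)
    have hJg : Continuous (J M lam fun u => exp (L * u) * g u) := cont_J lam hMt (hexp_cont g)
    have step1 : ∀ s ∈ Icc (0:ℝ) τ,
        |J M lam (fun u => exp (L * u) * f u) s - J M lam (fun u => exp (L * u) * g u) s|
          ≤ (|lam| + C) * D * exp (L * s) := by
      intro s hs
      have hs0 : (0:ℝ) ≤ s := hs.1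
      have hsT : s ≤ T := hs.2.trans hτT
      have hexps : (1:ℝ) ≤ exp (L * s) := by
        rw [← Real.exp_zero]; exact Real.exp_le_exp.2 (by positivity)
      have hinner : |conv M (fun u => exp (L * u) * f u) s
          - conv M (fun u => exp (L * u) * g u) s| ≤ C * D * ((exp (L * s) - 1) / L) := by
        have hif : IntervalIntegrable (fun u => Mt M (s - u) * (exp (L * u) * f u)) volume 0 s :=
          ((hMt.comp (continuous_const.sub continuous_id)).mul (hexp_cont f)).intervalIntegrable 0 s
        have hig : IntervalIntegrable (fun u => Mt M (s - u) * (exp (L * u) * g u)) volume 0 s :=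
          ((hMt.comp (continuous_const.sub continuous_id)).mul (hexp_cont g)).intervalIntegrable 0 s
        rw [conv, conv, ← intervalIntegral.integral_sub hif hig]
        have habs2 : ∀ u ∈ Icc (0:ℝ) s,
            |Mt M (s - u) * (exp (L * u) * f u) - Mt M (s - u) * (exp (L * u) * g u)|
              ≤ C * D * exp (L * u) := by
          intro u hu
          have h1 : Mt M (s - u) * (exp (L * u) * f u) - Mt M (s - u) * (exp (L * u) * g u)
              = Mt M (s - u) * exp (L * u) * (f u - g u) := by ring
          rw [h1, abs_mul, abs_mul, abs_of_pos (Real.exp_pos _)]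
          have hMb : |Mt M (s - u)| ≤ C := hC _ ⟨by linarith [hu.2], by linarith [hu.1]⟩
          calc |Mt M (s - u)| * exp (L * u) * |f u - g u|
              ≤ C * exp (L * u) * D := by
                apply mul_le_mul (mul_le_mul_of_nonneg_right hMb (Real.exp_pos _).le)
                  (hfg u) (abs_nonneg _) (by positivity)
            _ = C * D * exp (L * u) := by ring
        calc |∫ u in (0:ℝ)..s, (Mt M (s - u) * (exp (L * u) * f u)
                - Mt M (s - u) * (exp (L * u) * g u))|
            ≤ ∫ u in (0:ℝ)..s, |Mt M (s - u) * (exp (L * u) * f u)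
                - Mt M (s - u) * (exp (L * u) * g u)| :=
              intervalIntegral.abs_integral_le_integral_abs hs0
          _ ≤ ∫ u in (0:ℝ)..s, C * D * exp (L * u) := by
              apply intervalIntegral.integral_mono_on hs0 ((hif.sub hig).abs) _ habs2
              exact (continuous_const.mul (Real.continuous_exp.comp
                (continuous_const.mul continuous_id))).intervalIntegrable 0 s
          _ = C * D * ((exp (L * s) - 1) / L) := by
              rw [intervalIntegral.integral_const_mul, exp_integral hL0]
      have houter : |lam * (exp (L * s) * f s) - lam * (exp (L * s) * g s)|
          ≤ |lam| * D * exp (L * s) := by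
        have h1 : lam * (exp (L * s) * f s) - lam * (exp (L * s) * g s)
            = lam * exp (L * s) * (f s - g s) := by ring
        rw [h1, abs_mul, abs_mul, abs_of_pos (Real.exp_pos _)]
        calc |lam| * exp (L * s) * |f s - g s| ≤ |lam| * exp (L * s) * D :=
              mul_le_mul_of_nonneg_left (hfg s) (by positivity)
          _ = |lam| * D * exp (L * s) := by ring
      have hCD : C * D * ((exp (L * s) - 1) / L) ≤ C * D * exp (L * s) := by
        apply mul_le_mul_of_nonneg_left _ (by positivity)
        rw [div_le_iff₀ hL0]
        nlinarith [Real.exp_pos (L * s)]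
      simp only [J]
      calc |lam * (exp (L * s) * f s) + conv M (fun u => exp (L * u) * f u) s
            - (lam * (exp (L * s) * g s) + conv M (fun u => exp (L * u) * g u) s)|
          ≤ |lam * (exp (L * s) * f s) - lam * (exp (L * s) * g s)|
            + |conv M (fun u => exp (L * u) * f u) s - conv M (fun u => exp (L * u) * g u) s| := by
            have h2 : lam * (exp (L * s) * f s) + conv M (fun u => exp (L * u) * f u) s
                - (lam * (exp (L * s) * g s) + conv M (fun u => exp (L * u) * g u) s)
                = (lam * (exp (L * s) * f s) - lam * (exp (L * s) * g s))
                  + (conv M (fun u => exp (L * u) * f u) s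
                    - conv M (fun u => exp (L * u) * g u) s) := by ring
            rw [h2]; exact abs_add_le _ _
        _ ≤ |lam| * D * exp (L * s) + C * D * exp (L * s) := by
            have := hinner.trans hCD
            linarith [houter]
        _ = (|lam| + C) * D * exp (L * s) := by ring
    -- outer estimate
    have hint : |(∫ s in (0:ℝ)..τ, J M lam (fun u => exp (L * u) * f u) s)
        - ∫ s in (0:ℝ)..τ, J M lam (fun u => exp (L * u) * g u) s|
        ≤ (|lam| + C) * D * ((exp (L * τ) - 1) / L) := by
      rw [← intervalIntegral.integral_sub (hJf.intervalIntegrable 0 τ) (hJg.intervalIntegrable 0 τ)]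
      calc |∫ s in (0:ℝ)..τ, (J M lam (fun u => exp (L * u) * f u) s
              - J M lam (fun u => exp (L * u) * g u) s)|
          ≤ ∫ s in (0:ℝ)..τ, |J M lam (fun u => exp (L * u) * f u) s
              - J M lam (fun u => exp (L * u) * g u) s| :=
            intervalIntegral.abs_integral_le_integral_abs hτ0
        _ ≤ ∫ s in (0:ℝ)..τ, (|lam| + C) * D * exp (L * s) := by
            apply intervalIntegral.integral_mono_on hτ0 ((hJf.sub hJg).abs.intervalIntegrable 0 τ)
              _ step1
            exact (continuous_const.mul (Real.continuous_exp.comp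
              (continuous_const.mul continuous_id))).intervalIntegrable 0 τ
        _ = (|lam| + C) * D * ((exp (L * τ) - 1) / L) := by
            rw [intervalIntegral.integral_const_mul, exp_integral hL0]
    have hdiff : Φ f t - Φ g t = exp (-(L * τ)) *
        ((∫ s in (0:ℝ)..τ, J M lam (fun u => exp (L * u) * g u) s)
          - ∫ s in (0:ℝ)..τ, J M lam (fun u => exp (L * u) * f u) s) := by
      rw [hΦapp, hΦapp, ← hτdef]; ring
    rw [Real.dist_eq, hdiff, abs_mul, abs_of_pos (Real.exp_pos _)]
    have h3 : |(∫ s in (0:ℝ)..τ, J M lam (fun u => exp (L * u) * g u) s)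
        - ∫ s in (0:ℝ)..τ, J M lam (fun u => exp (L * u) * f u) s|
        ≤ (|lam| + C) * D * ((exp (L * τ) - 1) / L) := by
      rw [abs_sub_comm]; exact hint
    have hE1 : (1:ℝ) ≤ exp (L * τ) := by
      rw [← Real.exp_zero]; exact Real.exp_le_exp.2 (by positivity)
    have hexpneg : exp (-(L * τ)) = (exp (L * τ))⁻¹ := by rw [← Real.exp_neg]
    calc exp (-(L * τ)) * |(∫ s in (0:ℝ)..τ, J M lam (fun u => exp (L * u) * g u) s)
            - ∫ s in (0:ℝ)..τ, J M lam (fun u => exp (L * u) * f u) s|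
        ≤ exp (-(L * τ)) * ((|lam| + C) * D * ((exp (L * τ) - 1) / L)) :=
          mul_le_mul_of_nonneg_left h3 (Real.exp_pos _).le
      _ ≤ (1/2) * D := by
          rw [hexpneg]
          have h4 : (rexp (L * τ))⁻¹ * ((|lam| + C) * D * ((rexp (L * τ) - 1) / L))
              = (|lam| + C) * D * (rexp (L * τ) - 1) / (rexp (L * τ) * L) := by
            field_simp
          rw [h4, div_le_iff₀ (by positivity)]
          have hE0 : (0:ℝ) ≤ rexp (L * τ) := (Real.exp_pos _).le
          rw [hLdef]
          nlinarith [mul_nonneg (mul_nonneg habs hD0) hE0, mul_nonneg hD0 hE0,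
            mul_nonneg (mul_nonneg hC0 hD0) hE0, mul_nonneg habs hD0, mul_nonneg hC0 hD0]
  have hcontract : ContractingWith (1/2 : NNReal) Φ := by
    constructor
    · rw [← NNReal.coe_lt_coe]; norm_num
    · apply LipschitzWith.of_dist_le_mul
      intro f g
      calc dist (Φ f) (Φ g) ≤ (1/2 : ℝ) * dist f g :=
            (BoundedContinuousFunction.dist_le (by positivity)).2 (hbound f g)
        _ = ((1/2 : NNReal) : ℝ) * dist f g := by norm_num
  have hcx : ∀ {x : ℝ → ℝ}, Continuous x → Continuous fun u => exp (-(L * u)) * x u :=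
    fun hx => (Real.continuous_exp.comp (continuous_const.mul continuous_id).neg).mul hx
  have hfixed_of : ∀ (x : ℝ → ℝ) (hx : Continuous x), IntEq M lam x T →
      Function.IsFixedPt Φ (clampBCF (fun u => exp (-(L * u)) * x u) (hcx hx) T hT) := by
    intro x hx hI
    apply BoundedContinuousFunction.ext
    intro t
    set τ := max 0 (min t T) with hτdef
    have hτ0 : (0:ℝ) ≤ τ := le_max_left _ _
    have hτT : τ ≤ T := max_le hT (min_le_right _ _)
    rw [hΦapp]
    have hrhs : (clampBCF (fun u => exp (-(L * u)) * x u) (hcx hx) T hT) t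
        = exp (-(L * τ)) * x τ := by rw [clampBCF_apply]
    rw [hrhs]
    have hEqJ : EqOn (J M lam fun u => exp (L * u) *
        (clampBCF (fun v => exp (-(L * v)) * x v) (hcx hx) T hT) u) (J M lam x) (uIcc 0 τ) := by
      rw [uIcc_of_le hτ0]
      intro s hs
      have hsT : s ≤ T := hs.2.trans hτT
      have hys : ∀ u ∈ Icc (0:ℝ) τ, exp (L * u) *
          (clampBCF (fun v => exp (-(L * v)) * x v) (hcx hx) T hT) u = x u := by
        intro u hu
        rw [clampBCF_apply, clamp_eq hu.1 (hu.2.trans hτT), ← mul_assoc, ← Real.exp_add]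
        simp
      have hyval : ∀ u ∈ Icc (0:ℝ) s, exp (L * u) *
          (clampBCF (fun v => exp (-(L * v)) * x v) (hcx hx) T hT) u = x u := by
        intro u hu; exact hys u ⟨hu.1, hu.2.trans hs.2⟩
      simp only [J]
      congr 1
      · rw [hys s hs]
      · simp only [conv]
        apply intervalIntegral.integral_congr
        rw [uIcc_of_le hs.1]
        intro u hu
        show Mt M (s - u) * _ = Mt M (s - u) * x u
        rw [← hyval u hu]
    rw [intervalIntegral.integral_congr hEqJ]
    congr 1
    exact (hI τ ⟨hτ0, hτT⟩).symm
  constructor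
  · set f₀ : BoundedContinuousFunction ℝ ℝ := ContractingWith.fixedPoint Φ hcontract with hf₀def
    have hfix : Φ f₀ = f₀ := hcontract.fixedPoint_isFixedPt
    refine ⟨fun u => exp (L * u) * f₀ u, hexp_cont f₀, ?_⟩
    intro t ht
    have h1 : Φ f₀ t = f₀ t := by rw [hfix]
    have h2 := hΦapp f₀ t
    rw [clamp_eq ht.1 ht.2, h1] at h2
    show exp (L * t) * f₀ t = _
    rw [h2, ← mul_assoc, ← Real.exp_add]
    simp
  · intro x₁ x₂ hx₁ hx₂ hI₁ hI₂ t ht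
    have h1 := hfixed_of x₁ hx₁ hI₁
    have h2 := hfixed_of x₂ hx₂ hI₂
    have h3 := hcontract.fixedPoint_unique' h1 h2
    have h4 : (clampBCF (fun u => exp (-(L * u)) * x₁ u) (hcx hx₁) T hT) t
        = (clampBCF (fun u => exp (-(L * u)) * x₂ u) (hcx hx₂) T hT) t := by rw [h3]
    rw [clampBCF_apply, clampBCF_apply, clamp_eq ht.1 ht.2] at h4
    exact mul_left_cancel₀ (Real.exp_ne_zero _) h4



theorem exists_global (hMt : Continuous (Mt M)) :
    ∃ x : ℝ → ℝ, Continuous x ∧ ∀ T : ℝ, 0 ≤ T → IntEq M lam x T := by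
  choose xs hxs_cont hxs_eq using fun n : ℕ => (key lam hMt n (Nat.cast_nonneg n)).1
  set x : ℝ → ℝ := fun t => xs ⌈t⌉₊ (max t 0) with hxdef
  have hone : ∀ n : ℕ, xs n 0 = 1 := by
    intro n
    have := hxs_eq n 0 ⟨le_refl 0, Nat.cast_nonneg n⟩
    simpa using this
  have hagree : ∀ (n : ℕ) (t : ℝ), 0 ≤ t → t ≤ (n:ℝ) → x t = xs n t := by
    intro n t h0 hn
    have hceil : t ≤ (⌈t⌉₊ : ℝ) := Nat.le_ceil t
    have hmin : (0:ℝ) ≤ min ((⌈t⌉₊:ℕ) : ℝ) (n:ℝ) := le_min (h0.trans hceil) (h0.trans hn)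
    have h1 : IntEq M lam (xs ⌈t⌉₊) (min ((⌈t⌉₊:ℕ):ℝ) (n:ℝ)) := fun s hs =>
      hxs_eq ⌈t⌉₊ s ⟨hs.1, hs.2.trans (min_le_left _ _)⟩
    have h2 : IntEq M lam (xs n) (min ((⌈t⌉₊:ℕ):ℝ) (n:ℝ)) := fun s hs =>
      hxs_eq n s ⟨hs.1, hs.2.trans (min_le_right _ _)⟩
    have h3 := (key lam hMt (min ((⌈t⌉₊:ℕ):ℝ) (n:ℝ)) hmin).2 _ _ (hxs_cont _) (hxs_cont n) h1 h2
      ⟨h0, le_min hceil hn⟩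
    calc x t = xs ⌈t⌉₊ t := by rw [hxdef]; simp only; rw [max_eq_left h0]
      _ = xs n t := h3
  have hcont : Continuous x := by
    rw [continuous_iff_continuousAt]
    intro t₀
    set n : ℕ := ⌈t₀⌉₊ + 1 with hndef
    have hn : t₀ < (n:ℝ) := by
      have := Nat.le_ceil t₀
      push_cast [hndef]
      linarith
    have hev : ∀ s ∈ Iio (n:ℝ), x s = xs n (max s 0) := by
      intro s hs
      rcases le_or_gt 0 s with h0 | h0
      · rw [max_eq_left h0]; exact hagree n s h0 (le_of_lt hs)
      · rw [max_eq_right h0.le, hone]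
        rw [hxdef]; simp only
        rw [max_eq_right h0.le, hone]
    have hc2 : ContinuousAt (fun s => xs n (max s 0)) t₀ :=
      ((hxs_cont n).comp (continuous_id.max continuous_const)).continuousAt
    apply hc2.congr
    exact Filter.eventuallyEq_of_mem (Iio_mem_nhds hn) fun s hs => (hev s hs).symm
  refine ⟨x, hcont, ?_⟩
  intro T hT t ht
  set n : ℕ := ⌈T⌉₊ with hndef
  have htn : t ≤ (n:ℝ) := ht.2.trans (Nat.le_ceil T)
  have h1 : x t = xs n t := hagree n t ht.1 htn
  have h2 := hxs_eq n t ⟨ht.1, htn⟩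
  rw [h1, h2]
  congr 1
  apply intervalIntegral.integral_congr
  rw [uIcc_of_le ht.1]
  intro s hs
  show J M lam (xs n) s = J M lam x s
  have hxeq : ∀ u ∈ Icc (0:ℝ) s, xs n u = x u := fun u hu =>
    (hagree n u hu.1 ((hu.2.trans hs.2).trans htn)).symm
  have hxs2 : xs n s = x s := (hagree n s hs.1 (hs.2.trans htn)).symm
  simp only [J]
  congr 1
  · rw [hxs2]
  · simp only [conv]
    apply intervalIntegral.integral_congr
    rw [uIcc_of_le hs.1]
    intro u hu
    show Mt M (s - u) * xs n u = Mt M (s - u) * x u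
    rw [hxeq u hu]

end MemAux

/-- `MemSol M lam x x'` says `x` is a solution on `[0,∞)` of the memory ODE
`x'(t) + lam·x(t) + ∫₀ᵗ M(t−s)·x(s) ds = 0`, `x(0)=1`, with continuous
derivative `x'` on `[0,∞)` (i.e. `x` is continuously differentiable there). -/
def MemSol (M : ℝ → ℝ) (lam : ℝ) (x x' : ℝ → ℝ) : Prop :=
  x 0 = 1 ∧ ContinuousOn x' (Set.Ici 0) ∧
    (∀ t ∈ Set.Ici (0 : ℝ), HasDerivWithinAt x (x' t) (Set.Ici 0) t) ∧
    (∀ t ∈ Set.Ici (0 : ℝ), x' t + lam * x t + ∫ s in (0:ℝ)..t, M (t - s) * x s = 0)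

/-- For every `C²` memory kernel `M` on `[0,∞)` and every `λ ∈ ℝ`, there exists a unique
continuously differentiable solution of the memory ODE with parameter `λ`. -/
theorem stmt0 (M : ℝ → ℝ) (hM : ContDiffOn ℝ 2 M (Set.Ici 0)) (lam : ℝ) :
    (∃ x x' : ℝ → ℝ, MemSol M lam x x') ∧
    (∀ x₁ x₁' x₂ x₂' : ℝ → ℝ, MemSol M lam x₁ x₁' → MemSol M lam x₂ x₂' →
      Set.EqOn x₁ x₂ (Set.Ici 0)) := by
  have hMt : Continuous (MemAux.Mt M) :=
    hM.continuousOn.comp_continuous (continuous_id.max continuous_const)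
      (fun r => le_max_right r 0)
  constructor
  · obtain ⟨x, hxc, hIE⟩ := MemAux.exists_global lam hMt
    have hJ : Continuous (MemAux.J M lam x) := MemAux.cont_J lam hMt hxc
    refine ⟨x, fun t => -(MemAux.J M lam x t), ?_, ?_, ?_, ?_⟩
    · have := hIE 0 le_rfl 0 ⟨le_rfl, le_rfl⟩
      simpa using this
    · exact hJ.neg.continuousOn
    · intro t ht
      have hprim : HasDerivAt (fun r => 1 - ∫ s in (0:ℝ)..r, MemAux.J M lam x s)
          (-(MemAux.J M lam x t)) t := by
        have h1 : HasDerivAt (fun r => ∫ s in (0:ℝ)..r, MemAux.J M lam x s)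
            (MemAux.J M lam x t) t := (hJ.integral_hasStrictDerivAt 0 t).hasDerivAt
        simpa using h1.const_sub 1
      have hxF : ∀ s ∈ Set.Ici (0:ℝ), x s = 1 - ∫ u in (0:ℝ)..s, MemAux.J M lam x u :=
        fun s hs => hIE s hs s ⟨hs, le_rfl⟩
      exact (hprim.hasDerivWithinAt).congr (fun s hs => hxF s hs) (hxF t ht)
    · intro t ht
      have hcongr : ∫ s in (0:ℝ)..t, M (t - s) * x s = MemAux.conv M x t := by
        simp only [MemAux.conv]
        apply intervalIntegral.integral_congr
        rw [Set.uIcc_of_le ht]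
        intro s hs
        show M (t - s) * x s = MemAux.Mt M (t - s) * x s
        unfold MemAux.Mt
        rw [max_eq_left (by linarith [hs.2] : (0:ℝ) ≤ t - s)]
      rw [hcongr]
      simp only [MemAux.J]
      ring
  · intro x₁ x₁' x₂ x₂' h1 h2 t ht
    have hsol : ∀ (x x' : ℝ → ℝ), MemSol M lam x x' →
        Continuous (fun u => x (max u 0)) ∧
        ∀ T, 0 ≤ T → MemAux.IntEq M lam (fun u => x (max u 0)) T := by
      intro x x' hs
      obtain ⟨h0, hcont', hderiv, heq⟩ := hs
      have hxc : ContinuousOn x (Set.Ici 0) := fun s hs => (hderiv s hs).continuousWithinAt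
      have hyc : Continuous fun u => x (max u 0) :=
        hxc.comp_continuous (continuous_id.max continuous_const) (fun u => le_max_right u 0)
      refine ⟨hyc, ?_⟩
      intro T hT s hsmem
      obtain ⟨hs0, hsT⟩ := hsmem
      have hftc : ∫ u in (0:ℝ)..s, x' u = x s - x 0 := by
        apply intervalIntegral.integral_eq_sub_of_hasDeriv_right_of_le hs0
          (hxc.mono (fun v hv => hv.1))
          (fun u hu => (hderiv u hu.1.le).mono (fun v hv => (hu.1.trans hv).le))
        apply ContinuousOn.intervalIntegrable
        rw [Set.uIcc_of_le hs0]
        exact hcont'.mono (fun v hv => hv.1)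
      have heq' : ∀ u ∈ Set.Icc (0:ℝ) s, x' u = -(MemAux.J M lam (fun v => x (max v 0)) u) := by
        intro u hu
        have h := heq u hu.1
        have hconv : ∫ v in (0:ℝ)..u, M (u - v) * x v
            = MemAux.conv M (fun v => x (max v 0)) u := by
          simp only [MemAux.conv]
          apply intervalIntegral.integral_congr
          rw [Set.uIcc_of_le hu.1]
          intro v hv
          show M (u - v) * x v = MemAux.Mt M (u - v) * x (max v 0)
          unfold MemAux.Mt
          rw [max_eq_left (by linarith [hv.2] : (0:ℝ) ≤ u - v), max_eq_left hv.1]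
        simp only [MemAux.J]
        have hmax : x (max u 0) = x u := by rw [max_eq_left hu.1]
        rw [hmax, ← hconv]
        linarith [h]
      have hI : ∫ u in (0:ℝ)..s, x' u
          = ∫ u in (0:ℝ)..s, -(MemAux.J M lam (fun v => x (max v 0)) u) := by
        apply intervalIntegral.integral_congr
        rw [Set.uIcc_of_le hs0]
        exact fun u hu => heq' u hu
      rw [hI, intervalIntegral.integral_neg, h0] at hftc
      show x (max s 0) = _
      rw [max_eq_left hs0]
      linarith [hftc]
    obtain ⟨hc1, hI1⟩ := hsol x₁ x₁' h1
    obtain ⟨hc2, hI2⟩ := hsol x₂ x₂' h2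
    have h3 := (MemAux.key lam hMt t ht).2 _ _ hc1 hc2 (hI1 t ht) (hI2 t ht) ⟨ht, le_rfl⟩
    simpa [max_eq_left (show (0:ℝ) ≤ t from ht)] using h3
end
end

section
/- Let M be of class C² on [0,∞) and λ ∈ ℝ. Then the unique solution x of the memory ODE with parameter λ satisfies, for every t ≥ 0, x(t) = e^{−λt} + ∫₀ᵗ K_M(t,s)·e^{−λs} ds, where K_M(t,s) = Σ_{j≥1} (s^j/j!)·((−M)^{*j})(t−s) for 0 ≤ s ≤ t. -/
noncomputable section

/-- Convolution of two functions on `[0,∞)`: `(f*g)(t) = ∫₀ᵗ f(t−s)·g(s) ds`. -/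
noncomputable def conv (f g : ℝ → ℝ) : ℝ → ℝ := fun t => ∫ s in (0:ℝ)..t, f (t - s) * g s

/-- Convolution powers: `convPow f 1 = f`, `convPow f (j+1) = conv f (convPow f j)`.
(The value at `0` is junk and never used.) -/
noncomputable def convPow (f : ℝ → ℝ) : ℕ → ℝ → ℝ
  | 0 => fun _ => 0
  | 1 => f
  | (j+2) => conv f (convPow f (j+1))

/-- The kernel `K_M(t,s) = Σ_{j≥1} (s^j/j!)·((−M)^{*j})(t−s)`. -/
noncomputable def KM (M : ℝ → ℝ) (t s : ℝ) : ℝ :=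
  ∑' j : ℕ, s ^ (j+1) / (Nat.factorial (j+1) : ℝ) * convPow (fun τ => -M τ) (j+1) (t - s)

open MeasureTheory intervalIntegral Set Function

lemma conv_comm (f g : ℝ → ℝ) : conv f g = conv g f := by
  funext t
  unfold conv
  have h1 : (∫ s in (0:ℝ)..t, f (t - s) * g s)
      = ∫ s in (0:ℝ)..t, (fun u => f u * g (t - u)) (t - s) := by
    apply intervalIntegral.integral_congr
    intro s _
    simp only []
    ring_nf
  rw [h1, intervalIntegral.integral_comp_sub_left (fun u => f u * g (t - u)) t]
  simp only [sub_self, sub_zero]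
  apply intervalIntegral.integral_congr
  intro s _
  ring

lemma conv_congr_right (f g g' : ℝ → ℝ) (t : ℝ) (h : ∀ s ∈ Set.uIcc 0 t, g s = g' s) :
    conv f g t = conv f g' t := by
  apply intervalIntegral.integral_congr
  intro s hs
  simp only []
  rw [h s hs]

lemma conv_continuous {f g : ℝ → ℝ} (hf : Continuous f) (hg : Continuous g) :
    Continuous (conv f g) := by
  apply intervalIntegral.continuous_parametric_intervalIntegral_of_continuous
    (f := fun t s => f (t - s) * g s) (μ := volume) ?_ continuous_id
  exact ((hf.comp (continuous_fst.sub continuous_snd)).mul (hg.comp continuous_snd))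

lemma convPow_continuous {f : ℝ → ℝ} (hf : Continuous f) (j : ℕ) :
    Continuous (convPow f (j+1)) := by
  induction j with
  | zero => exact hf
  | succ n ih => exact conv_continuous hf ih

lemma convPow_succ (f : ℝ → ℝ) (k : ℕ) (hk : 1 ≤ k) :
    convPow f (k+1) = conv f (convPow f k) := by
  match k, hk with
  | (j+1), _ => rfl

lemma triangle_swap (F : ℝ → ℝ → ℝ) (hF : Continuous (Function.uncurry F)) {t : ℝ}
    (ht : 0 ≤ t) :
    (∫ s in (0:ℝ)..t, ∫ u in (0:ℝ)..s, F s u) = ∫ u in (0:ℝ)..t, ∫ s in u..t, F s u := by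
  set μ : Measure ℝ := volume.restrict (Ioc (0:ℝ) t) with hμ
  haveI : IsFiniteMeasure μ := by
    constructor
    rw [hμ]
    rw [Measure.restrict_apply_univ]
    exact measure_Ioc_lt_top
  set G : ℝ × ℝ → ℝ := fun p => if p.2 ≤ p.1 then F p.1 p.2 else 0 with hG
  have hGind : G = Set.indicator {p : ℝ × ℝ | p.2 ≤ p.1} (Function.uncurry F) := by
    funext p
    simp [hG, Set.indicator_apply, Function.uncurry, Set.mem_setOf_eq]
  have hset : MeasurableSet {p : ℝ × ℝ | p.2 ≤ p.1} :=
    measurableSet_le measurable_snd measurable_fst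
  have hGm : AEStronglyMeasurable G (μ.prod μ) := by
    rw [hGind]
    exact (hF.stronglyMeasurable.indicator hset).aestronglyMeasurable
  obtain ⟨C, hC⟩ := (isCompact_Icc.prod isCompact_Icc :
      IsCompact (Icc (0:ℝ) t ×ˢ Icc (0:ℝ) t)).exists_bound_of_continuousOn hF.continuousOn
  have hbound : ∀ p ∈ Ioc (0:ℝ) t ×ˢ Ioc (0:ℝ) t, ‖G p‖ ≤ max C 0 := by
    rintro ⟨s, u⟩ ⟨hs, hu⟩
    simp only [hG]
    split_ifs with h
    · exact le_trans (hC (s, u) ⟨⟨hs.1.le, hs.2⟩, ⟨hu.1.le, hu.2⟩⟩) (le_max_left _ _)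
    · simp
  have hInt : Integrable G (μ.prod μ) := by
    refine Integrable.mono' (integrable_const (max C 0)) hGm ?_
    rw [hμ, Measure.prod_restrict]
    exact ae_restrict_of_forall_mem (measurableSet_Ioc.prod measurableSet_Ioc) hbound
  have swap : (∫ s, ∫ u, G (s, u) ∂μ ∂μ) = ∫ u, ∫ s, G (s, u) ∂μ ∂μ :=
    MeasureTheory.integral_integral_swap (f := fun s u => G (s, u)) hInt
  have hL : (∫ s in (0:ℝ)..t, ∫ u in (0:ℝ)..s, F s u) = ∫ s, ∫ u, G (s, u) ∂μ ∂μ := by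
    rw [intervalIntegral.integral_of_le ht]
    apply setIntegral_congr_fun measurableSet_Ioc
    intro s hs
    show (∫ u in (0:ℝ)..s, F s u) = ∫ u, G (s, u) ∂μ
    have h1 : (∫ u, G (s, u) ∂μ) = ∫ u in Ioc (0:ℝ) t, Set.indicator (Iic s) (F s) u := by
      apply setIntegral_congr_fun measurableSet_Ioc
      intro u _
      simp [hG, Set.indicator_apply]
    rw [h1, setIntegral_indicator measurableSet_Iic]
    have h2 : Ioc (0:ℝ) t ∩ Iic s = Ioc 0 s := by
      ext u
      simp only [mem_inter_iff, mem_Ioc, mem_Iic]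
      exact ⟨fun ⟨⟨h1', _⟩, h3'⟩ => ⟨h1', h3'⟩,
        fun ⟨h1', h2'⟩ => ⟨⟨h1', h2'.trans hs.2⟩, h2'⟩⟩
    rw [h2, intervalIntegral.integral_of_le hs.1.le]
  have hR : (∫ u in (0:ℝ)..t, ∫ s in u..t, F s u) = ∫ u, ∫ s, G (s, u) ∂μ ∂μ := by
    rw [intervalIntegral.integral_of_le ht]
    apply setIntegral_congr_fun measurableSet_Ioc
    intro u hu
    show (∫ s in u..t, F s u) = ∫ s, G (s, u) ∂μ
    have h1 : (∫ s, G (s, u) ∂μ) = ∫ s in Ioc (0:ℝ) t, Set.indicator (Ici u) (fun s => F s u) s := by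
      apply setIntegral_congr_fun measurableSet_Ioc
      intro s _
      simp [hG, Set.indicator_apply]
    rw [h1, setIntegral_indicator measurableSet_Ici]
    have h2 : Ioc (0:ℝ) t ∩ Ici u = Icc u t := by
      ext s
      simp only [mem_inter_iff, mem_Ioc, mem_Icc, mem_Ici]
      exact ⟨fun ⟨⟨_, h2'⟩, h3'⟩ => ⟨h3', h2'⟩,
        fun ⟨h1', h2'⟩ => ⟨⟨lt_of_lt_of_le hu.1 h1', h2'⟩, h1'⟩⟩
    rw [h2, integral_Icc_eq_integral_Ioc, intervalIntegral.integral_of_le hu.2]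
  rw [hL, hR, swap]

lemma conv_assoc {f g h : ℝ → ℝ} (hf : Continuous f) (hg : Continuous g)
    (hh : Continuous h) {t : ℝ} (ht : 0 ≤ t) :
    conv (conv f g) h t = conv f (conv g h) t := by
  have key : conv f (conv g h) t
      = ∫ s in (0:ℝ)..t, ∫ u in (0:ℝ)..s, f (t - s) * (g (s - u) * h u) := by
    unfold conv
    apply intervalIntegral.integral_congr
    intro s _
    simp only []
    rw [← intervalIntegral.integral_const_mul]
  rw [key, triangle_swap (fun s u => f (t - s) * (g (s - u) * h u))
    (by fun_prop) ht]
  unfold conv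
  apply intervalIntegral.integral_congr
  intro u _
  simp only []
  have inner : (∫ s in u..t, f (t - s) * (g (s - u) * h u))
      = (∫ r in (0:ℝ)..(t - u), f (t - u - r) * g r) * h u := by
    have e1 : (∫ s in u..t, f (t - s) * (g (s - u) * h u))
        = ∫ s in u..t, (fun r => f (t - u - r) * g r * h u) (s - u) := by
      apply intervalIntegral.integral_congr
      intro s _
      simp only []
      ring_nf
    rw [e1, intervalIntegral.integral_comp_sub_right (fun r => f (t - u - r) * g r * h u) u,
      sub_self]
    rw [intervalIntegral.integral_mul_const]
  rw [inner]

/-- `gk lam k s = s^k / k! * exp(-(lam s))`. -/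
noncomputable def gk (lam : ℝ) (k : ℕ) : ℝ → ℝ :=
  fun s => s ^ k / (Nat.factorial k : ℝ) * Real.exp (-(lam * s))

lemma gk_zero (lam : ℝ) : gk lam 0 = fun s => Real.exp (-(lam * s)) := by
  funext s; simp [gk]

lemma gk_continuous (lam : ℝ) (k : ℕ) : Continuous (gk lam k) := by
  unfold gk; fun_prop

lemma conv_E_gk (lam : ℝ) (k : ℕ) : conv (gk lam 0) (gk lam k) = gk lam (k + 1) := by
  funext t
  unfold conv
  have h1 : ∀ s : ℝ, gk lam 0 (t - s) * gk lam k s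
      = Real.exp (-(lam * t)) / (Nat.factorial k : ℝ) * s ^ k := by
    intro s
    have hexp : Real.exp (-(lam * (t - s))) * Real.exp (-(lam * s)) = Real.exp (-(lam * t)) := by
      rw [← Real.exp_add]; congr 1; ring
    simp only [gk, pow_zero, Nat.factorial_zero, Nat.cast_one]
    linear_combination (s ^ k / (Nat.factorial k : ℝ)) * hexp
  have h2 : (∫ s in (0:ℝ)..t, gk lam 0 (t - s) * gk lam k s)
      = ∫ s in (0:ℝ)..t, Real.exp (-(lam * t)) / (Nat.factorial k : ℝ) * s ^ k := by
    apply intervalIntegral.integral_congr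
    intro s _
    simp only []
    exact h1 s
  rw [h2, intervalIntegral.integral_const_mul, integral_pow]
  have hkfac : (Nat.factorial k : ℝ) ≠ 0 := Nat.cast_ne_zero.mpr (Nat.factorial_ne_zero k)
  have hk1 : ((k:ℝ) + 1) ≠ 0 := by positivity
  simp only [gk, Nat.factorial_succ]
  push_cast
  field_simp
  ring

lemma convPow_congr {f f' : ℝ → ℝ} {T : ℝ} (h : ∀ s ∈ Icc (0:ℝ) T, f s = f' s) :
    ∀ j, ∀ τ ∈ Icc (0:ℝ) T, convPow f (j+1) τ = convPow f' (j+1) τ := by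
  intro j
  induction j with
  | zero => exact fun τ hτ => h τ hτ
  | succ n ih =>
    intro τ hτ
    show conv f (convPow f (n+1)) τ = conv f' (convPow f' (n+1)) τ
    apply intervalIntegral.integral_congr
    intro s hs
    rw [Set.uIcc_of_le hτ.1] at hs
    have hsT : s ∈ Icc (0:ℝ) T := ⟨hs.1, hs.2.trans hτ.2⟩
    have hτs : τ - s ∈ Icc (0:ℝ) T := ⟨by linarith [hs.2], by linarith [hs.1, hτ.2]⟩
    simp only []
    rw [h _ hτs, ih s hsT]

lemma convPow_bound {f : ℝ → ℝ} (hf : Continuous f) {C T : ℝ} (hC : 0 ≤ C)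
    (hb : ∀ τ ∈ Icc (0:ℝ) T, |f τ| ≤ C) :
    ∀ j, ∀ τ ∈ Icc (0:ℝ) T, |convPow f (j+1) τ| ≤ C ^ (j+1) * τ ^ j / (Nat.factorial j : ℝ) := by
  intro j
  induction j with
  | zero => intro τ hτ; simpa [convPow] using hb τ hτ
  | succ n ih =>
    intro τ hτ
    have hτ0 : (0:ℝ) ≤ τ := hτ.1
    have key : ‖∫ s in (0:ℝ)..τ, f (τ - s) * convPow f (n+1) s‖
        ≤ |∫ s in (0:ℝ)..τ, C * (C ^ (n+1) * s ^ n / (Nat.factorial n : ℝ))| := by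
      apply intervalIntegral.norm_integral_le_abs_of_norm_le
      · apply ae_restrict_of_forall_mem measurableSet_uIoc
        intro s hs
        rw [Set.uIoc_of_le hτ0] at hs
        have hsT : s ∈ Icc (0:ℝ) T := ⟨hs.1.le, hs.2.trans hτ.2⟩
        have hτs : τ - s ∈ Icc (0:ℝ) T := ⟨by linarith [hs.2], by linarith [hs.1.le, hτ.2]⟩
        rw [Real.norm_eq_abs, abs_mul]
        exact mul_le_mul (hb _ hτs) (ih s hsT) (abs_nonneg _)  hC
      · apply Continuous.intervalIntegrable
        fun_prop
    have hval : (∫ s in (0:ℝ)..τ, C * (C ^ (n+1) * s ^ n / (Nat.factorial n : ℝ)))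
        = C ^ (n+2) * τ ^ (n+1) / (Nat.factorial (n+1) : ℝ) := by
      have : ∀ s : ℝ, C * (C ^ (n+1) * s ^ n / (Nat.factorial n : ℝ))
          = C ^ (n+2) / (Nat.factorial n : ℝ) * s ^ n := by intro s; ring
      rw [intervalIntegral.integral_congr (fun s _ => this s),
        intervalIntegral.integral_const_mul, integral_pow]
      have hkfac : (Nat.factorial n : ℝ) ≠ 0 := Nat.cast_ne_zero.mpr (Nat.factorial_ne_zero n)
      have hn1 : ((n:ℝ) + 1) ≠ 0 := by positivity
      rw [Nat.factorial_succ]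
      rw [zero_pow (Nat.succ_ne_zero n), sub_zero]
      push_cast
      rw [div_mul_div_comm, mul_comm ((n:ℝ)+1)]
    have hnn : (0:ℝ) ≤ C ^ (n+2) * τ ^ (n+1) / (Nat.factorial (n+1) : ℝ) := by positivity
    calc |convPow f (n+2) τ|
        ≤ |∫ s in (0:ℝ)..τ, C * (C ^ (n+1) * s ^ n / (Nat.factorial n : ℝ))| := by
          rw [← Real.norm_eq_abs]; exact key
      _ = C ^ (n+2) * τ ^ (n+1) / (Nat.factorial (n+1) : ℝ) := by rw [hval, abs_of_nonneg hnn]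

lemma interval_integral_tsum {F : ℕ → ℝ → ℝ} {t : ℝ} (ht : 0 ≤ t)
    (hc : ∀ j, Continuous (F j)) {u : ℕ → ℝ} (hu : Summable u)
    (hb : ∀ j, ∀ s ∈ Ioc (0:ℝ) t, ‖F j s‖ ≤ u j) :
    ∑' j, (∫ s in (0:ℝ)..t, F j s) = ∫ s in (0:ℝ)..t, (∑' j, F j s) := by
  have hInt : ∀ j, Integrable (F j) (volume.restrict (Ioc (0:ℝ) t)) := fun j =>
    (hc j).integrableOn_Ioc
  have hnormle : ∀ j, (∫ s in Ioc (0:ℝ) t, ‖F j s‖) ≤ u j * t := by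
    intro j
    have h1 : (∫ s in Ioc (0:ℝ) t, ‖F j s‖) ≤ ∫ _s in Ioc (0:ℝ) t, u j := by
      apply setIntegral_mono_on (hInt j).norm (integrableOn_const measure_Ioc_lt_top.ne)
        measurableSet_Ioc
      exact fun s hs => hb j s hs
    have h2 : (∫ _s in Ioc (0:ℝ) t, u j) = u j * t := by
      rw [setIntegral_const, Real.volume_real_Ioc_of_le ht, smul_eq_mul, sub_zero,
        mul_comm]
    linarith
  have hsum : Summable fun j => ∫ s in Ioc (0:ℝ) t, ‖F j s‖ := by
    apply Summable.of_nonneg_of_le (fun j => integral_nonneg (fun s => norm_nonneg _))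
      hnormle (hu.mul_right t)
  simp only [intervalIntegral.integral_of_le ht]
  exact integral_tsum_of_summable_integral_norm hInt hsum

/-- `conv L (A k) = A (k+1)` where `L = conv (gk lam 0) N`, `A k = conv (convPow N k) (gk lam k)`. -/
lemma convLA (lam : ℝ) {N : ℝ → ℝ} (hN : Continuous N) (k : ℕ) (hk : 1 ≤ k) {t : ℝ}
    (ht : 0 ≤ t) :
    conv (conv (gk lam 0) N) (conv (convPow N k) (gk lam k)) t
      = conv (convPow N (k+1)) (gk lam (k+1)) t := by
  have hE := gk_continuous lam 0
  have hgk := gk_continuous lam k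
  have hPk := convPow_continuous hN (k-1)
  have hPk' : Continuous (convPow N k) := by
    have : k - 1 + 1 = k := Nat.succ_pred_eq_of_pos hk
    rwa [this] at hPk
  have hPk1 : Continuous (convPow N (k+1)) := convPow_continuous hN k
  have step1 : conv (conv (gk lam 0) N) (conv (convPow N k) (gk lam k)) t
      = conv (gk lam 0) (conv N (conv (convPow N k) (gk lam k))) t :=
    conv_assoc hE hN (conv_continuous hPk' hgk) ht
  have step2 : conv (gk lam 0) (conv N (conv (convPow N k) (gk lam k))) t
      = conv (gk lam 0) (conv (convPow N (k+1)) (gk lam k)) t := by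
    apply conv_congr_right
    intro s hs
    rw [Set.uIcc_of_le ht] at hs
    rw [convPow_succ N k hk]
    exact (conv_assoc hN hPk' hgk hs.1).symm
  have step3 : conv (gk lam 0) (conv (convPow N (k+1)) (gk lam k)) t
      = conv (convPow N (k+1)) (conv (gk lam 0) (gk lam k)) t := by
    rw [← conv_assoc hE hPk1 hgk ht, conv_comm (gk lam 0) (convPow N (k+1)),
      conv_assoc hPk1 hE hgk ht]
  rw [step1, step2, step3, conv_E_gk]

lemma convLg (lam : ℝ) {N : ℝ → ℝ} (hN : Continuous N) {t : ℝ} (ht : 0 ≤ t) :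
    conv (conv (gk lam 0) N) (gk lam 0) t = conv (convPow N 1) (gk lam 1) t := by
  have hE := gk_continuous lam 0
  rw [conv_comm (gk lam 0) N, conv_assoc hN hE hE ht, conv_E_gk]
  rfl

/-- Summable majorant for the series terms. -/
noncomputable def wB (lam T C : ℝ) (j : ℕ) : ℝ :=
  Real.exp (|lam| * T) * (C * (T+1)) * ((C * (T+1)^2) ^ j / (Nat.factorial j : ℝ))

lemma wB_nonneg {lam T C : ℝ} (hT : 0 ≤ T) (hC : 0 ≤ C) (j : ℕ) : 0 ≤ wB lam T C j := by
  unfold wB; positivity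

lemma wB_summable (lam T C : ℝ) : Summable (wB lam T C) :=
  (Real.summable_pow_div_factorial _).mul_left _

lemma kernel_term_bound (lam : ℝ) {N : ℝ → ℝ} (hN : Continuous N) {T C : ℝ} (hT : 0 ≤ T)
    (hC : 0 ≤ C) (hb : ∀ τ ∈ Icc (0:ℝ) T, |N τ| ≤ C) (j : ℕ) :
    ∀ r ∈ Icc (0:ℝ) T, ∀ s ∈ Icc (0:ℝ) r,
      |convPow N (j+1) (r - s) * gk lam (j+1) s| ≤ wB lam T C j := by
  intro r hr s hs
  have hs0 : (0:ℝ) ≤ s := hs.1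
  have hsr : s ≤ r := hs.2
  have hrT : r ≤ T := hr.2
  have hr0 : (0:ℝ) ≤ r := hr.1
  have hrs : r - s ∈ Icc (0:ℝ) T := ⟨by linarith, by linarith⟩
  have h1 : |convPow N (j+1) (r - s)| ≤ C ^ (j+1) * (T+1) ^ j / (Nat.factorial j : ℝ) := by
    refine (convPow_bound hN hC hb j _ hrs).trans ?_
    have hfj : (0:ℝ) < (Nat.factorial j : ℝ) := Nat.cast_pos.mpr (Nat.factorial_pos j)
    have hp : (r - s) ^ j ≤ (T+1) ^ j := pow_le_pow_left₀ hrs.1 (by linarith [hrs.2]) j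
    have hm : C ^ (j+1) * (r - s) ^ j ≤ C ^ (j+1) * (T+1) ^ j :=
      mul_le_mul_of_nonneg_left hp (by positivity)
    exact (div_le_div_iff_of_pos_right hfj).mpr hm
  have hfac1 : (1:ℝ) ≤ (Nat.factorial (j+1) : ℝ) :=
    Nat.one_le_cast.mpr (Nat.one_le_iff_ne_zero.mpr (Nat.factorial_ne_zero _))
  have h2 : |gk lam (j+1) s| ≤ (T+1) ^ (j+1) * Real.exp (|lam| * T) := by
    have hgnn : 0 ≤ gk lam (j+1) s := by
      unfold gk; positivity
    rw [abs_of_nonneg hgnn]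
    unfold gk
    have e1 : s ^ (j+1) / (Nat.factorial (j+1) : ℝ) ≤ (T+1) ^ (j+1) := by
      calc s ^ (j+1) / (Nat.factorial (j+1) : ℝ) ≤ s ^ (j+1) / 1 :=
            div_le_div_of_nonneg_left (by positivity) one_pos hfac1
          _ = s ^ (j+1) := div_one _
          _ ≤ (T+1) ^ (j+1) := pow_le_pow_left₀ hs0 (by linarith) _
    have e2 : Real.exp (-(lam * s)) ≤ Real.exp (|lam| * T) := by
      apply Real.exp_le_exp.mpr
      calc -(lam * s) ≤ |lam * s| := neg_le_abs _
        _ = |lam| * |s| := abs_mul _ _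
        _ ≤ |lam| * T := by
            rw [abs_of_nonneg hs0]
            gcongr
            linarith
    exact mul_le_mul e1 e2 (Real.exp_pos _).le (by positivity)
  calc |convPow N (j+1) (r - s) * gk lam (j+1) s|
      = |convPow N (j+1) (r - s)| * |gk lam (j+1) s| := abs_mul _ _
    _ ≤ (C ^ (j+1) * (T+1) ^ j / (Nat.factorial j : ℝ))
        * ((T+1) ^ (j+1) * Real.exp (|lam| * T)) :=
        mul_le_mul h1 h2 (abs_nonneg _) (by positivity)
    _ = wB lam T C j := by
        unfold wB
        rw [mul_pow, ← pow_mul]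
        field_simp
        ring

/-- Uniqueness for the homogeneous Volterra equation. -/
lemma volterra_unique {L z : ℝ → ℝ} (hL : Continuous L) {T : ℝ} (hT : 0 ≤ T)
    (hz : ContinuousOn z (Icc 0 T))
    (heq : ∀ t ∈ Icc (0:ℝ) T, z t = ∫ s in (0:ℝ)..t, L (t - s) * z s) :
    ∀ t ∈ Icc (0:ℝ) T, z t = 0 := by
  obtain ⟨B0, hB0⟩ := isCompact_Icc.exists_bound_of_continuousOn hz
  obtain ⟨C0, hC0⟩ := isCompact_Icc.exists_bound_of_continuousOn
    (hL.continuousOn : ContinuousOn L (Icc (0:ℝ) T))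
  set B := max B0 0 with hB
  set C := max C0 0 with hC
  have hBnn : 0 ≤ B := le_max_right _ _
  have hCnn : 0 ≤ C := le_max_right _ _
  have hzB : ∀ s ∈ Icc (0:ℝ) T, |z s| ≤ B := fun s hs => (hB0 s hs).trans (le_max_left _ _)
  have hLC : ∀ s ∈ Icc (0:ℝ) T, |L s| ≤ C := fun s hs => (hC0 s hs).trans (le_max_left _ _)
  have hzcont : ∀ t ∈ Icc (0:ℝ) T, ContinuousOn (fun s => L (t - s) * z s) (Icc 0 t) := by
    intro t htm
    apply ContinuousOn.mul
    · exact (hL.comp (continuous_const.sub continuous_id)).continuousOn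
    · exact hz.mono (Icc_subset_Icc le_rfl htm.2)
  have claim : ∀ n : ℕ, ∀ t ∈ Icc (0:ℝ) T, |z t| ≤ B * (C ^ n * t ^ n / (Nat.factorial n : ℝ)) := by
    intro n
    induction n with
    | zero => intro t htm; simpa using hzB t htm
    | succ n ih =>
      intro t htm
      have ht0 : (0:ℝ) ≤ t := htm.1
      have key : ‖∫ s in (0:ℝ)..t, L (t - s) * z s‖
          ≤ |∫ s in (0:ℝ)..t, C * (B * (C ^ n * s ^ n / (Nat.factorial n : ℝ)))| := by
        apply intervalIntegral.norm_integral_le_abs_of_norm_le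
        · apply ae_restrict_of_forall_mem measurableSet_uIoc
          intro s hs
          rw [Set.uIoc_of_le ht0] at hs
          have hsT : s ∈ Icc (0:ℝ) T := ⟨hs.1.le, hs.2.trans htm.2⟩
          have hts : t - s ∈ Icc (0:ℝ) T := ⟨by linarith [hs.2], by linarith [hs.1.le, htm.2]⟩
          rw [Real.norm_eq_abs, abs_mul]
          exact mul_le_mul (hLC _ hts) (ih s hsT) (abs_nonneg _) hCnn
        · apply Continuous.intervalIntegrable; fun_prop
      have hval : (∫ s in (0:ℝ)..t, C * (B * (C ^ n * s ^ n / (Nat.factorial n : ℝ))))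
          = B * (C ^ (n+1) * t ^ (n+1) / (Nat.factorial (n+1) : ℝ)) := by
        have e : ∀ s : ℝ, C * (B * (C ^ n * s ^ n / (Nat.factorial n : ℝ)))
            = B * C ^ (n+1) / (Nat.factorial n : ℝ) * s ^ n := by intro s; ring
        rw [intervalIntegral.integral_congr (fun s _ => e s),
          intervalIntegral.integral_const_mul, integral_pow,
          zero_pow (Nat.succ_ne_zero n), sub_zero, Nat.factorial_succ]
        push_cast
        have hfn : (Nat.factorial n : ℝ) ≠ 0 := Nat.cast_ne_zero.mpr (Nat.factorial_ne_zero n)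
        field_simp
      have hnn : (0:ℝ) ≤ B * (C ^ (n+1) * t ^ (n+1) / (Nat.factorial (n+1) : ℝ)) := by positivity
      calc |z t| = ‖∫ s in (0:ℝ)..t, L (t - s) * z s‖ := by
            rw [heq t htm]; rfl
        _ ≤ |∫ s in (0:ℝ)..t, C * (B * (C ^ n * s ^ n / (Nat.factorial n : ℝ)))| := key
        _ = B * (C ^ (n+1) * t ^ (n+1) / (Nat.factorial (n+1) : ℝ)) := by
            rw [hval, abs_of_nonneg hnn]
  intro t htm
  have htend : Filter.Tendsto (fun n : ℕ => B * (C ^ n * t ^ n / (Nat.factorial n : ℝ)))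
      Filter.atTop (nhds 0) := by
    have h1 : Filter.Tendsto (fun n : ℕ => (C * t) ^ n / (Nat.factorial n : ℝ))
        Filter.atTop (nhds 0) := (Real.summable_pow_div_factorial (C * t)).tendsto_atTop_zero
    have h2 := h1.const_mul B
    rw [mul_zero] at h2
    convert h2 using 2 with n
    rw [mul_pow]
  have hle : |z t| ≤ 0 := ge_of_tendsto' htend (fun n => claim n t htm)
  exact abs_eq_zero.mp (le_antisymm hle (abs_nonneg _))

/-- Integral representation of the solution of the memory ODE. -/
theorem stmt2 (M : ℝ → ℝ) (hM : ContDiffOn ℝ 2 M (Set.Ici 0)) (lam : ℝ)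
    (x x' : ℝ → ℝ) (hx : MemSol M lam x x') :
    ∀ t ≥ (0:ℝ),
      x t = Real.exp (-(lam * t)) + ∫ s in (0:ℝ)..t, KM M t s * Real.exp (-(lam * s)) := by
  obtain ⟨hx0, hx'c, hxd, hode⟩ := hx
  have hxcont : ContinuousOn x (Set.Ici 0) := fun s hs => (hxd s hs).continuousWithinAt
  set Mc : ℝ → ℝ := fun τ => M (max τ 0) with hMcdef
  have hMccont : Continuous Mc :=
    hM.continuousOn.comp_continuous (continuous_id.max continuous_const)
      (fun τ => Set.mem_Ici.mpr (le_max_right _ _))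
  set N : ℝ → ℝ := fun τ => -Mc τ with hNdef
  have hN : Continuous N := hMccont.neg
  set xc : ℝ → ℝ := fun τ => x (max τ 0) with hxcdef
  have hxccont : Continuous xc :=
    hxcont.comp_continuous (continuous_id.max continuous_const)
      (fun τ => Set.mem_Ici.mpr (le_max_right _ _))
  have hxceq : ∀ r, 0 ≤ r → xc r = x r := by
    intro r hr
    show x (max r 0) = x r
    rw [max_eq_left hr]
  set L : ℝ → ℝ := conv (gk lam 0) N with hLdef
  have hL : Continuous L := conv_continuous (gk_continuous lam 0) hN
  set A : ℕ → ℝ → ℝ := fun k => conv (convPow N k) (gk lam k) with hAdef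
  have hAcont : ∀ j : ℕ, Continuous (A (j+1)) := fun j =>
    conv_continuous (convPow_continuous hN j) (gk_continuous lam (j+1))
  set S : ℝ → ℝ := fun τ => ∑' j : ℕ, A (j+1) τ with hSdef
  set y : ℝ → ℝ := fun τ => gk lam 0 τ + S τ with hydef
  -- Volterra equation for x
  have hxV : ∀ r, 0 ≤ r → x r = gk lam 0 r + conv L xc r := by
    intro r hr
    set u : ℝ → ℝ := fun τ => Real.exp (lam * τ) * x τ with hudef
    set w : ℝ → ℝ := fun τ => -(Real.exp (lam * τ) * conv Mc xc τ) with hwdef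
    have hMxcont : Continuous (conv Mc xc) := conv_continuous hMccont hxccont
    have hwcont : Continuous w := ((Real.continuous_exp.comp
      (continuous_const.mul continuous_id)).mul hMxcont).neg
    have hMx : ∀ τ, 0 ≤ τ → (∫ s in (0:ℝ)..τ, M (τ - s) * x s) = conv Mc xc τ := by
      intro τ hτ
      apply intervalIntegral.integral_congr
      intro s hs
      rw [Set.uIcc_of_le hτ] at hs
      show M (τ - s) * x s = Mc (τ - s) * xc s
      rw [hMcdef, hxcdef]
      simp only []
      rw [max_eq_left (by linarith [hs.2] : (0:ℝ) ≤ τ - s), max_eq_left hs.1]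
    have hderiv : ∀ τ ∈ Set.Ici (0:ℝ), HasDerivWithinAt u (w τ) (Set.Ici 0) τ := by
      intro τ hτ
      have hE : HasDerivAt (fun q => Real.exp (lam * q)) (Real.exp (lam * τ) * lam) τ := by
        have h := (Real.hasDerivAt_exp (lam * τ)).comp τ ((hasDerivAt_id τ).const_mul lam)
        simp only [mul_one] at h
        exact h
      have hprod := (hE.hasDerivWithinAt).mul (hxd τ hτ)
      have hI : conv Mc xc τ = -(x' τ + lam * x τ) := by
        rw [← hMx τ hτ]
        linarith [hode τ hτ]
      refine hprod.congr_deriv ?_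
      rw [hwdef]
      simp only []
      rw [hI]
      ring
    have hint : (∫ s in (0:ℝ)..r, w s) = u r - u 0 := by
      apply intervalIntegral.integral_eq_sub_of_hasDeriv_right_of_le hr
      · exact ((Real.continuous_exp.comp (continuous_const.mul continuous_id)).continuousOn).mul
          (hxcont.mono (fun p hp => hp.1))
      · intro s hs
        exact (hderiv s (le_of_lt hs.1)).mono (fun p hp => le_of_lt (lt_trans hs.1 hp))
      · exact hwcont.intervalIntegrable _ _
    have hu0 : u 0 = 1 := by
      rw [hudef]; simp [hx0]
    have hur : u r = 1 + ∫ s in (0:ℝ)..r, w s := by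
      rw [hint, hu0]; ring
    have hexp1 : Real.exp (-(lam * r)) * Real.exp (lam * r) = 1 := by
      rw [← Real.exp_add]; simp
    have hxr : x r = Real.exp (-(lam * r)) * (1 + ∫ s in (0:ℝ)..r, w s) := by
      rw [← hur, hudef]
      simp only []
      rw [← mul_assoc, hexp1, one_mul]
    have step : Real.exp (-(lam * r)) * (1 + ∫ s in (0:ℝ)..r, w s)
        = gk lam 0 r + ∫ s in (0:ℝ)..r, gk lam 0 (r - s) * conv N xc s := by
      rw [mul_add, mul_one]
      congr 1
      · rw [gk]; simp
      · rw [← intervalIntegral.integral_const_mul]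
        apply intervalIntegral.integral_congr
        intro s _
        simp only []
        have hNC : conv N xc s = -conv Mc xc s := by
          show (∫ q in (0:ℝ)..s, N (s - q) * xc q) = -(∫ q in (0:ℝ)..s, Mc (s - q) * xc q)
          rw [← intervalIntegral.integral_neg]
          apply intervalIntegral.integral_congr
          intro q _
          show N (s - q) * xc q = -(Mc (s - q) * xc q)
          rw [hNdef]
          ring
        rw [hwdef, hNC]
        simp only [gk, pow_zero, Nat.factorial_zero, Nat.cast_one]
        have : Real.exp (-(lam * (r - s))) = Real.exp (-(lam * r)) * Real.exp (lam * s) := by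
          rw [← Real.exp_add]; congr 1; ring
        rw [this]
        ring
    have last : (∫ s in (0:ℝ)..r, gk lam 0 (r - s) * conv N xc s) = conv L xc r := by
      show conv (gk lam 0) (conv N xc) r = conv L xc r
      rw [hLdef]
      exact (conv_assoc (gk_continuous lam 0) hN hxccont hr).symm
    rw [hxr, step, last]
  intro t ht
  -- bounds on [0, t]
  obtain ⟨C0, hC0⟩ := isCompact_Icc.exists_bound_of_continuousOn
    (hN.continuousOn : ContinuousOn N (Icc (0:ℝ) t))
  set C := max C0 0 with hCdef
  have hCnn : (0:ℝ) ≤ C := le_max_right _ _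
  have hNb : ∀ τ ∈ Icc (0:ℝ) t, |N τ| ≤ C := fun τ hτ => (hC0 τ hτ).trans (le_max_left _ _)
  obtain ⟨CL0, hCL0⟩ := isCompact_Icc.exists_bound_of_continuousOn
    (hL.continuousOn : ContinuousOn L (Icc (0:ℝ) t))
  set CL := max CL0 0 with hCLdef
  have hCLnn : (0:ℝ) ≤ CL := le_max_right _ _
  have hLb : ∀ τ ∈ Icc (0:ℝ) t, |L τ| ≤ CL := fun τ hτ => (hCL0 τ hτ).trans (le_max_left _ _)
  have hwsum : Summable (wB lam t C) := wB_summable _ _ _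
  have hW := kernel_term_bound lam hN ht hCnn hNb
  have hAb : ∀ j, ∀ s ∈ Icc (0:ℝ) t, |A (j+1) s| ≤ wB lam t C j * t := by
    intro j s hs
    have hb' : ∀ q ∈ Set.uIoc (0:ℝ) s, ‖convPow N (j+1) (s - q) * gk lam (j+1) q‖
        ≤ wB lam t C j := by
      intro q hq
      rw [Set.uIoc_of_le hs.1] at hq
      rw [Real.norm_eq_abs]
      exact hW j s hs q ⟨hq.1.le, hq.2⟩
    have hkey := intervalIntegral.norm_integral_le_of_norm_le_const hb'
    rw [sub_zero, abs_of_nonneg hs.1] at hkey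
    calc |A (j+1) s| ≤ wB lam t C j * s := hkey
      _ ≤ wB lam t C j * t := mul_le_mul_of_nonneg_left hs.2 (wB_nonneg ht hCnn j)
  have hwsum' : Summable (fun j => wB lam t C j * t) := hwsum.mul_right t
  have hSsummable : ∀ s ∈ Icc (0:ℝ) t, Summable (fun j => A (j+1) s) := fun s hs =>
    Summable.of_norm_bounded hwsum' (fun j => by
      rw [Real.norm_eq_abs]; exact hAb j s hs)
  have hScont : ContinuousOn S (Icc (0:ℝ) t) := by
    rw [hSdef]
    exact continuousOn_tsum (fun j => (hAcont j).continuousOn) hwsum'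
      (fun j s hs => by rw [Real.norm_eq_abs]; exact hAb j s hs)
  have hycont : ContinuousOn y (Icc (0:ℝ) t) :=
    ((gk_continuous lam 0).continuousOn).add hScont
  -- Volterra equation for y
  have hyV : ∀ r ∈ Icc (0:ℝ) t, conv L y r = S r := by
    intro r hrm
    have hr0 : (0:ℝ) ≤ r := hrm.1
    have hSII : IntervalIntegrable (fun s => L (r - s) * S s) volume 0 r := by
      apply ContinuousOn.intervalIntegrable
      rw [Set.uIcc_of_le hr0]
      exact ((hL.comp (continuous_const.sub continuous_id)).continuousOn).mul
        (hScont.mono (Icc_subset_Icc le_rfl hrm.2))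
    have hgII : IntervalIntegrable (fun s => L (r - s) * gk lam 0 s) volume 0 r := by
      apply Continuous.intervalIntegrable
      exact (hL.comp (continuous_const.sub continuous_id)).mul (gk_continuous lam 0)
    have hsplit : conv L y r = conv L (gk lam 0) r + conv L S r := by
      have e : ∀ s, L (r - s) * y s = L (r - s) * gk lam 0 s + L (r - s) * S s := by
        intro s
        rw [hydef]
        simp only []
        ring
      calc conv L y r = ∫ s in (0:ℝ)..r, (L (r - s) * gk lam 0 s + L (r - s) * S s) :=
            intervalIntegral.integral_congr (fun s _ => e s)
        _ = _ := intervalIntegral.integral_add hgII hSII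
    have hLS : conv L S r = ∑' j : ℕ, A (j+2) r := by
      have h1 : conv L S r = ∫ s in (0:ℝ)..r, ∑' j : ℕ, L (r - s) * A (j+1) s := by
        apply intervalIntegral.integral_congr
        intro s _
        simp only []
        exact (tsum_mul_left).symm
      have hFc : ∀ j : ℕ, Continuous (fun s => L (r - s) * A (j+1) s) := fun j =>
        (hL.comp (continuous_const.sub continuous_id)).mul (hAcont j)
      have hFb : ∀ j : ℕ, ∀ s ∈ Ioc (0:ℝ) r, ‖L (r - s) * A (j+1) s‖
          ≤ CL * (wB lam t C j * t) := by
        intro j s hs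
        rw [Real.norm_eq_abs, abs_mul]
        have h2 : r - s ∈ Icc (0:ℝ) t := ⟨by linarith [hs.2], by linarith [hs.1.le, hrm.2]⟩
        have h3 : s ∈ Icc (0:ℝ) t := ⟨hs.1.le, hs.2.trans hrm.2⟩
        exact mul_le_mul (hLb _ h2) (hAb j s h3) (abs_nonneg _) hCLnn
      rw [h1, ← interval_integral_tsum hr0 hFc (hwsum'.mul_left CL) hFb]
      apply tsum_congr
      intro j
      exact convLA lam hN (j+1) (Nat.le_add_left 1 j) hr0
    rw [hsplit, hLS, convLg lam hN hr0]
    exact (Summable.tsum_eq_zero_add (hSsummable r hrm)).symm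
  -- difference is zero
  set z : ℝ → ℝ := fun τ => xc τ - y τ with hzdef
  have hzcont : ContinuousOn z (Icc (0:ℝ) t) := (hxccont.continuousOn).sub hycont
  have hzeq : ∀ r ∈ Icc (0:ℝ) t, z r = ∫ s in (0:ℝ)..r, L (r - s) * z s := by
    intro r hrm
    have hr0 : (0:ℝ) ≤ r := hrm.1
    have hxcII : IntervalIntegrable (fun s => L (r - s) * xc s) volume 0 r :=
      ((hL.comp (continuous_const.sub continuous_id)).mul hxccont).intervalIntegrable _ _
    have hyII : IntervalIntegrable (fun s => L (r - s) * y s) volume 0 r := by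
      apply ContinuousOn.intervalIntegrable
      rw [Set.uIcc_of_le hr0]
      exact ((hL.comp (continuous_const.sub continuous_id)).continuousOn).mul
        (hycont.mono (Icc_subset_Icc le_rfl hrm.2))
    have e1 : z r = conv L xc r - conv L y r := by
      rw [hzdef]
      simp only []
      rw [hxceq r hr0, hxV r hr0, hydef]
      simp only []
      rw [hyV r hrm]
      ring
    rw [e1]
    show conv L xc r - conv L y r = ∫ s in (0:ℝ)..r, L (r - s) * z s
    rw [show conv L xc r - conv L y r
        = ∫ s in (0:ℝ)..r, (L (r - s) * xc s - L (r - s) * y s) from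
      (intervalIntegral.integral_sub hxcII hyII).symm]
    apply intervalIntegral.integral_congr
    intro s _
    rw [hzdef]
    simp only []
    ring
  have hz0 : z t = 0 := volterra_unique hL ht hzcont hzeq t ⟨ht, le_rfl⟩
  have hxyt : x t = gk lam 0 t + S t := by
    have h1 : xc t = y t := sub_eq_zero.mp hz0
    rw [← hxceq t ht, h1, hydef]
  -- identify S t with the KM integral
  have hKM : (∫ s in (0:ℝ)..t, KM M t s * Real.exp (-(lam * s))) = S t := by
    have hMN : ∀ rr ∈ Icc (0:ℝ) t, (fun τ => -M τ) rr = N rr := by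
      intro rr hrr
      show -M rr = -M (max rr 0)
      rw [max_eq_left hrr.1]
    have hcongr : (∫ s in (0:ℝ)..t, KM M t s * Real.exp (-(lam * s)))
        = ∫ s in (0:ℝ)..t, ∑' j : ℕ, convPow N (j+1) (t - s) * gk lam (j+1) s := by
      rw [intervalIntegral.integral_of_le ht, intervalIntegral.integral_of_le ht]
      apply setIntegral_congr_fun measurableSet_Ioc
      intro s hs
      show KM M t s * Real.exp (-(lam * s)) = _
      have hts : t - s ∈ Icc (0:ℝ) t := ⟨by linarith [hs.2], by linarith [hs.1.le]⟩
      have h1 : KM M t s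
          = ∑' j : ℕ, s ^ (j+1) / (Nat.factorial (j+1) : ℝ) * convPow N (j+1) (t - s) := by
        apply tsum_congr
        intro j
        rw [convPow_congr hMN j (t - s) hts]
      rw [h1, ← tsum_mul_right]
      apply tsum_congr
      intro j
      simp only [gk]
      ring
    have hFc : ∀ j : ℕ, Continuous (fun s => convPow N (j+1) (t - s) * gk lam (j+1) s) :=
      fun j => ((convPow_continuous hN j).comp (continuous_const.sub continuous_id)).mul
        (gk_continuous lam (j+1))
    have hFb : ∀ j : ℕ, ∀ s ∈ Ioc (0:ℝ) t, ‖convPow N (j+1) (t - s) * gk lam (j+1) s‖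
        ≤ wB lam t C j := by
      intro j s hs
      rw [Real.norm_eq_abs]
      exact hW j t ⟨ht, le_rfl⟩ s ⟨hs.1.le, hs.2⟩
    rw [hcongr, ← interval_integral_tsum ht hFc hwsum hFb]
    rfl
  rw [hxyt, hKM]
  congr 1
  rw [gk]
  simp
end
end

section
/- Let M be of class C² on [0,∞) with M(τ) ≤ 0 for all τ ≥ 0, and let λ > 0. Then the unique solution x of the memory ODE with parameter λ satisfies x(t) ≥ e^{−λt} > 0 for all t ≥ 0; in particular x has no zeros in (0,∞). -/
noncomputable section

/-- For `C²` nonpositive kernels and `λ > 0`, the solution dominates `e^{−λt}` and never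
vanishes on `(0,∞)`. -/
theorem stmt4 (M : ℝ → ℝ) (hM : ContDiffOn ℝ 2 M (Set.Ici 0))
    (hM0 : ∀ τ ≥ (0:ℝ), M τ ≤ 0) (lam : ℝ) (hlam : 0 < lam)
    (x x' : ℝ → ℝ) (hx : MemSol M lam x x') :
    (∀ t ≥ (0:ℝ), Real.exp (-(lam * t)) ≤ x t ∧ 0 < x t) ∧
    (∀ t > (0:ℝ), x t ≠ 0) := by
  obtain ⟨hx0, hx'c, hderiv, heq⟩ := hx
  have hxc : ContinuousOn x (Set.Ici 0) := fun t ht => (hderiv t ht).continuousWithinAt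
  -- the integral term is nonpositive whenever x ≥ 0 on [0,t]
  have hint : ∀ t ≥ (0:ℝ), (∀ s ∈ Set.Icc (0:ℝ) t, 0 ≤ x s) →
      (∫ s in (0:ℝ)..t, M (t - s) * x s) ≤ 0 := by
    intro t ht hpos
    have h0 : 0 ≤ ∫ s in (0:ℝ)..t, -(M (t - s) * x s) := by
      apply intervalIntegral.integral_nonneg ht
      intro u hu
      have h1 : M (t - u) ≤ 0 := hM0 _ (by linarith [hu.1, hu.2])
      have := mul_nonpos_of_nonpos_of_nonneg h1 (hpos u hu)
      linarith
    rw [intervalIntegral.integral_neg] at h0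
    linarith
  -- key monotonicity lemma
  have key : ∀ T ≥ (0:ℝ), (∀ s ∈ Set.Icc (0:ℝ) T, 0 ≤ x s) →
      ∀ t ∈ Set.Icc (0:ℝ) T, 1 ≤ x t * Real.exp (lam * t) := by
    intro T hT hpos
    set g : ℝ → ℝ := fun s => x s * Real.exp (lam * s) with hg
    have hgc : ContinuousOn g (Set.Icc 0 T) :=
      (hxc.mono Set.Icc_subset_Ici_self).mul
        ((Real.continuous_exp.comp (continuous_const.mul continuous_id)).continuousOn)
    have hgd : ∀ s ∈ Set.Ioo (0:ℝ) T, HasDerivAt g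
        ((x' s + lam * x s) * Real.exp (lam * s)) s := by
      intro s hs
      have hmem : Set.Ici (0:ℝ) ∈ nhds s := Ici_mem_nhds hs.1
      have hd : HasDerivAt x (x' s) s := (hderiv s (le_of_lt hs.1)).hasDerivAt hmem
      have he : HasDerivAt (fun u => Real.exp (lam * u)) (lam * Real.exp (lam * s)) s := by
        exact (((hasDerivAt_id s).const_mul lam).exp).congr_deriv (by simp [mul_comm])
      have := hd.mul he
      exact this.congr_deriv (by ring)
    have hderivnn : ∀ s ∈ Set.Ioo (0:ℝ) T, 0 ≤ (x' s + lam * x s) * Real.exp (lam * s) := by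
      intro s hs
      have hI : (∫ u in (0:ℝ)..s, M (s - u) * x u) ≤ 0 :=
        hint s (le_of_lt hs.1) (fun u hu => hpos u ⟨hu.1, le_trans hu.2 (le_of_lt hs.2)⟩)
      have hE := heq s (le_of_lt hs.1)
      have : 0 ≤ x' s + lam * x s := by linarith
      exact mul_nonneg this (Real.exp_pos _).le
    have hmono : MonotoneOn g (Set.Icc 0 T) := by
      apply monotoneOn_of_deriv_nonneg (convex_Icc 0 T) hgc
      · intro s hs
        rw [interior_Icc] at hs
        exact (hgd s hs).differentiableAt.differentiableWithinAt
      · intro s hs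
        rw [interior_Icc] at hs
        rw [(hgd s hs).deriv]
        exact hderivnn s hs
    intro t ht
    have h0 : g 0 = 1 := by simp [hg, hx0]
    have := hmono ⟨le_refl 0, hT⟩ ht ht.1
    rw [h0] at this
    exact this
  -- positivity everywhere
  have hposall : ∀ t ≥ (0:ℝ), 0 < x t := by
    by_contra h
    push_neg at h
    obtain ⟨t, ht, hxt⟩ := h
    set Z : Set ℝ := Set.Icc 0 t ∩ x ⁻¹' Set.Iic 0 with hZ
    have hZcl : IsClosed Z :=
      (hxc.mono Set.Icc_subset_Ici_self).preimage_isClosed_of_isClosed isClosed_Icc isClosed_Iic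
    have hZne : Z.Nonempty := ⟨t, ⟨ht, le_refl t⟩, hxt⟩
    have hZbdd : BddBelow Z := ⟨0, fun s hs => hs.1.1⟩
    set t0 := sInf Z with ht0
    have ht0Z : t0 ∈ Z := hZcl.csInf_mem hZne hZbdd
    have ht0nn : 0 ≤ t0 := ht0Z.1.1
    have ht0pos : 0 < t0 := by
      rcases lt_or_eq_of_le ht0nn with h | h
      · exact h
      · exfalso
        have h2 : x t0 ≤ 0 := ht0Z.2
        rw [← h, hx0] at h2; linarith
    have hposlt : ∀ s, 0 ≤ s → s < t0 → 0 < x s := by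
      intro s hs hst0
      by_contra hc
      push_neg at hc
      have hsZ : s ∈ Z := ⟨⟨hs, by linarith [ht0Z.1.2]⟩, hc⟩
      have := csInf_le hZbdd hsZ
      linarith
    -- x t0 ≥ 0 by continuity from the left
    have hxt0nn : 0 ≤ x t0 := by
      have hc : ContinuousAt x t0 :=
        (hderiv t0 ht0nn).hasDerivAt (Ici_mem_nhds ht0pos) |>.continuousAt
      have htend : Filter.Tendsto x (nhdsWithin t0 (Set.Iio t0)) (nhds (x t0)) :=
        hc.continuousWithinAt.tendsto
      refine ge_of_tendsto htend ?_
      filter_upwards [Ioo_mem_nhdsLT_of_mem (⟨ht0pos, le_refl t0⟩ : t0 ∈ Set.Ioc 0 t0)]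
        with s hs
      exact (hposlt s hs.1.le hs.2).le
    have hpos0 : ∀ s ∈ Set.Icc (0:ℝ) t0, 0 ≤ x s := by
      intro s hs
      rcases lt_or_eq_of_le hs.2 with h | h
      · exact (hposlt s hs.1 h).le
      · rw [h]; exact hxt0nn
    have h1 := key t0 ht0nn hpos0 t0 ⟨ht0nn, le_refl t0⟩
    have hxt0le : x t0 ≤ 0 := ht0Z.2
    nlinarith [Real.exp_pos (lam * t0)]
  constructor
  · intro t ht
    refine ⟨?_, hposall t ht⟩
    have h1 := key t ht (fun s hs => (hposall s hs.1).le) t ⟨ht, le_refl t⟩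
    have he := Real.exp_pos (lam * t)
    rw [Real.exp_neg]
    rw [inv_le_iff_one_le_mul₀ he]
    linarith [h1]
  · intro t ht
    exact ne_of_gt (hposall t ht.le)
end
end

section
/- Let M be of class C² on [0,∞) with M(τ) ≤ 0 for all τ ≥ 0, let (λ_k)_{k≥1} be a sequence of positive real numbers, and for each k let x_k be the unique solution of the memory ODE with parameter λ_k. Then for every t₀ > 0 and every a = (a_k) ∈ ℓ², if a_k·x_k(t₀) = 0 for all k ≥ 1, then a = 0. -/
noncomputable section

/-- Solutions of the memory ODE with nonpositive kernel stay positive. -/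
lemma memSol_pos (M : ℝ → ℝ) (hM0 : ∀ τ ≥ (0:ℝ), M τ ≤ 0)
    (lam : ℝ) (x x' : ℝ → ℝ) (h : MemSol M lam x x') :
    ∀ t ≥ (0:ℝ), 0 < x t := by
  obtain ⟨h0, -, hd, heq⟩ := h
  have hxc : ContinuousOn x (Set.Ici 0) := fun s hs => (hd s hs).continuousWithinAt
  intro t ht
  by_contra hle
  push_neg at hle
  -- there is a zero in [0,t]
  have hzero : ∃ r ∈ Set.Icc (0:ℝ) t, x r = 0 := by
    have hsub : Set.Icc (0:ℝ) t ⊆ Set.Ici 0 := Set.Icc_subset_Ici_self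
    have := intermediate_value_Icc' ht (hxc.mono hsub)
    have h0mem : (0:ℝ) ∈ Set.Icc (x t) (x 0) := ⟨hle, by rw [h0]; norm_num⟩
    obtain ⟨r, hr, hxr⟩ := this h0mem
    exact ⟨r, hr, hxr⟩
  set S : Set ℝ := {s ∈ Set.Icc (0:ℝ) t | x s = 0} with hS
  have hSne : S.Nonempty := by
    obtain ⟨r, hr, hxr⟩ := hzero; exact ⟨r, hr, hxr⟩
  have hSbdd : BddBelow S := ⟨0, fun s hs => hs.1.1⟩
  have hSclosed : IsClosed S := by
    have hSeq : S = Set.Icc (0:ℝ) t ∩ x ⁻¹' {0} := by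
      ext s
      simp only [hS, Set.mem_setOf_eq, Set.mem_inter_iff, Set.mem_preimage,
        Set.mem_singleton_iff]
    rw [hSeq]
    exact ContinuousOn.preimage_isClosed_of_isClosed
      (hxc.mono Set.Icc_subset_Ici_self) isClosed_Icc isClosed_singleton
  set T := sInf S with hT
  have hTS : T ∈ S := hSclosed.csInf_mem hSne hSbdd
  have hT0 : 0 ≤ T := hTS.1.1
  have hTt : T ≤ t := hTS.1.2
  have hxT : x T = 0 := hTS.2
  -- x ≥ 0 on [0,T]
  have hxnn : ∀ s ∈ Set.Icc (0:ℝ) T, 0 ≤ x s := by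
    intro s hs
    by_contra hneg
    push_neg at hneg
    have hs0 : (0:ℝ) ≤ s := hs.1
    have hcont : ContinuousOn x (Set.Icc 0 s) :=
      hxc.mono Set.Icc_subset_Ici_self
    have h0mem : (0:ℝ) ∈ Set.Icc (x s) (x 0) := ⟨hneg.le, by rw [h0]; norm_num⟩
    obtain ⟨r, hr, hxr⟩ := intermediate_value_Icc' hs0 hcont h0mem
    have hrS : r ∈ S := ⟨⟨hr.1, le_trans hr.2 (le_trans hs.2 hTt)⟩, hxr⟩
    have : T ≤ r := csInf_le hSbdd hrS
    have hrs : r = s := le_antisymm (le_trans hr.2 (le_refl s))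
      (le_trans (le_trans hs.2 this) (le_refl r)) |>.symm ▸ rfl
    -- r ≤ s ≤ T ≤ r, so r = s
    have : s ≤ r := le_trans hs.2 this
    have hrs' : r = s := le_antisymm hr.2 this
    rw [hrs'] at hxr
    exact absurd hxr (ne_of_lt hneg)
  -- g = exp(lam·s)·x s is monotone on [0,T]
  set g : ℝ → ℝ := fun s => Real.exp (lam * s) * x s with hg
  have hmono : MonotoneOn g (Set.Icc 0 T) := by
    apply monotoneOn_of_hasDerivWithinAt_nonneg (convex_Icc 0 T)
      (f' := fun s => Real.exp (lam * s) * lam * x s + Real.exp (lam * s) * x' s)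
    · exact ((Real.continuous_exp.comp (continuous_const.mul continuous_id)).continuousOn).mul
        (hxc.mono Set.Icc_subset_Ici_self)
    · intro s hs
      rw [interior_Icc] at hs
      have hsIci : s ∈ Set.Ici (0:ℝ) := le_of_lt hs.1
      have h1 : HasDerivAt (fun u => Real.exp (lam * u)) (Real.exp (lam * s) * lam) s := by
        have : HasDerivAt (fun u : ℝ => lam * u) lam s := by
          simpa using (hasDerivAt_id s).const_mul lam
        exact this.exp
      have h2 : HasDerivWithinAt x (x' s) (interior (Set.Icc (0:ℝ) T)) s :=
        (hd s hsIci).mono (by rw [interior_Icc]; exact fun u hu => le_of_lt hu.1)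
      exact (h1.hasDerivWithinAt.mul h2)
    · intro s hs
      rw [interior_Icc] at hs
      have hsIci : s ∈ Set.Ici (0:ℝ) := le_of_lt hs.1
      have hint : (∫ u in (0:ℝ)..s, M (s - u) * x u) ≤ 0 := by
        have hneg : 0 ≤ ∫ u in (0:ℝ)..s, -(M (s - u) * x u) := by
          apply intervalIntegral.integral_nonneg (le_of_lt hs.1)
          intro u hu
          have hMu : M (s - u) ≤ 0 := hM0 _ (by linarith [hu.1, hu.2])
          have hxu : 0 ≤ x u := hxnn u ⟨hu.1, le_trans hu.2 (le_of_lt hs.2)⟩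
          have := mul_nonpos_of_nonpos_of_nonneg hMu hxu
          linarith
        rw [intervalIntegral.integral_neg] at hneg
        linarith
      have heqs := heq s hsIci
      have hxl : x' s + lam * x s = -(∫ u in (0:ℝ)..s, M (s - u) * x u) := by linarith
      have : Real.exp (lam * s) * lam * x s + Real.exp (lam * s) * x' s
          = Real.exp (lam * s) * (x' s + lam * x s) := by ring
      rw [this, hxl]
      have : 0 ≤ -(∫ u in (0:ℝ)..s, M (s - u) * x u) := by linarith
      positivity
  have h0mem : (0:ℝ) ∈ Set.Icc (0:ℝ) T := ⟨le_refl 0, hT0⟩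
  have hTmem : T ∈ Set.Icc (0:ℝ) T := ⟨hT0, le_refl T⟩
  have := hmono h0mem hTmem hT0
  simp [hg, h0, hxT] at this
  linarith [Real.exp_pos (lam * T)]

/-- For nonpositive `C²` kernels, backward uniqueness holds at every single time instant. -/
theorem stmt8 (M : ℝ → ℝ) (hM : ContDiffOn ℝ 2 M (Set.Ici 0))
    (hM0 : ∀ τ ≥ (0:ℝ), M τ ≤ 0)
    (lam : ℕ → ℝ) (hlam : ∀ k, 0 < lam k)
    (x x' : ℕ → ℝ → ℝ) (hx : ∀ k, MemSol M (lam k) (x k) (x' k)) :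
    ∀ t₀ > (0:ℝ), ∀ a : ℕ → ℝ, Summable (fun k => (a k) ^ 2) →
      (∀ k, a k * x k t₀ = 0) → a = 0 := by
  intro t₀ ht₀ a _ ha
  funext k
  have hpos : 0 < x k t₀ := memSol_pos M hM0 (lam k) (x k) (x' k) (hx k) t₀ ht₀.le
  have := ha k
  rcases mul_eq_zero.mp this with h | h
  · exact h
  · exact absurd h (ne_of_gt hpos)
end
end

section
/- Let c > 0, α ∈ ℝ, λ ∈ ℝ, set s = (λ+α)² − 4c, and assume s > 0. Define w⁺ = (−(λ−α) + √s)/2 and w⁻ = (−(λ−α) − √s)/2. Then the unique solution x of the memory ODE with kernel M(t) = c·e^{αt} and parameter λ is given by x(t) = [(w⁺−α)·e^{w⁺t} − (w⁻−α)·e^{w⁻t}] / (w⁺ − w⁻) for all t ≥ 0. -/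
noncomputable section

/-- Explicit solution of the memory ODE with kernel `c·e^{αt}` when the discriminant
`s = (λ+α)² − 4c` is positive. -/
theorem stmt11 (c α lam : ℝ) (hc : 0 < c)
    (hs : 0 < (lam + α) ^ 2 - 4 * c)
    (wp wm : ℝ)
    (hwp : wp = (-(lam - α) + Real.sqrt ((lam + α) ^ 2 - 4 * c)) / 2)
    (hwm : wm = (-(lam - α) - Real.sqrt ((lam + α) ^ 2 - 4 * c)) / 2)
    (x x' : ℝ → ℝ) (hx : MemSol (fun t => c * Real.exp (α * t)) lam x x') :
    ∀ t ≥ (0:ℝ),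
      x t = ((wp - α) * Real.exp (wp * t) - (wm - α) * Real.exp (wm * t)) / (wp - wm) := by
  obtain ⟨hx0, hx'c, hxd, heq⟩ := hx
  -- algebra facts
  have hr2 : Real.sqrt ((lam + α) ^ 2 - 4 * c) ^ 2 = (lam + α) ^ 2 - 4 * c := Real.sq_sqrt hs.le
  have hkp : (wp - α) * (wp + lam) = -c := by rw [hwp]; linear_combination hr2 / 4
  have hkm : (wm - α) * (wm + lam) = -c := by rw [hwm]; linear_combination hr2 / 4
  have hdiff : wp - wm = Real.sqrt ((lam + α) ^ 2 - 4 * c) := by rw [hwp, hwm]; ring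
  have hne : wp - wm ≠ 0 := by
    rw [hdiff]; exact ne_of_gt (Real.sqrt_pos.mpr hs)
  -- continuity of x
  have hxc : ContinuousOn x (Set.Ici 0) := fun t ht => (hxd t ht).continuousWithinAt
  -- the auxiliary integrand
  set h : ℝ → ℝ := fun s => Real.exp (-(α * s)) * x s with hh
  have hhc : ContinuousOn h (Set.Ici 0) := by
    apply ContinuousOn.mul _ hxc
    exact (Real.continuous_exp.comp (continuous_const.mul continuous_id).neg).continuousOn
  set F : ℝ → ℝ := fun t => ∫ s in (0:ℝ)..t, h s with hF
  -- candidate solution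
  set y : ℝ → ℝ := fun t =>
    ((wp - α) * Real.exp (wp * t) - (wm - α) * Real.exp (wm * t)) / (wp - wm) with hy
  set g2 : ℝ → ℝ := fun t =>
    (Real.exp ((wp - α) * t) - Real.exp ((wm - α) * t)) / (wp - wm) with hg2
  intro T hT
  -- setup for the 2-dim ODE on [0,T]
  set τ : ℝ → ℝ := fun t => max 0 (min t T) with hτ
  set A : ℝ := Real.exp (|α| * T) with hA
  set v : ℝ → ℝ × ℝ → ℝ × ℝ := fun t p =>
    (-(lam * p.1) - c * Real.exp (α * τ t) * p.2, Real.exp (-(α * τ t)) * p.1) with hv_def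
  set K : NNReal := ⟨|lam| + c * A + A, by positivity⟩ with hK
  have hvlip : ∀ t, LipschitzOnWith K (v t) Set.univ := by
    intro t
    apply LipschitzWith.lipschitzOnWith
    apply LipschitzWith.of_dist_le_mul
    intro p q
    have hτ1 : 0 ≤ τ t := le_max_left _ _
    have hτ2 : τ t ≤ T := max_le hT (min_le_right _ _)
    have habs : |α * τ t| ≤ |α| * T := by
      rw [abs_mul]
      apply mul_le_mul_of_nonneg_left _ (abs_nonneg α)
      rw [abs_of_nonneg hτ1]; exact hτ2
    have hE1 : Real.exp (α * τ t) ≤ A := Real.exp_le_exp.mpr (le_trans (le_abs_self _) habs)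
    have hE2 : Real.exp (-(α * τ t)) ≤ A := by
      apply Real.exp_le_exp.mpr
      calc -(α * τ t) ≤ |α * τ t| := neg_le_abs _
        _ ≤ |α| * T := habs
    have hApos : (0:ℝ) < A := Real.exp_pos _
    rw [Prod.dist_eq, Prod.dist_eq]
    simp only [hv_def, Real.dist_eq]
    have hd1 : |p.1 - q.1| ≤ max |p.1 - q.1| |p.2 - q.2| := le_max_left _ _
    have hd2 : |p.2 - q.2| ≤ max |p.1 - q.1| |p.2 - q.2| := le_max_right _ _
    have hDnn : (0:ℝ) ≤ max |p.1 - q.1| |p.2 - q.2| :=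
      le_trans (abs_nonneg _) hd1
    have hKc : (K : ℝ) = |lam| + c * A + A := rfl
    rw [hKc]
    apply max_le
    · have : -(lam * p.1) - c * Real.exp (α * τ t) * p.2 -
          (-(lam * q.1) - c * Real.exp (α * τ t) * q.2)
          = -(lam * (p.1 - q.1)) - c * Real.exp (α * τ t) * (p.2 - q.2) := by ring
      rw [this]
      calc |(-(lam * (p.1 - q.1)) - c * Real.exp (α * τ t) * (p.2 - q.2))|
          ≤ |lam * (p.1 - q.1)| + |c * Real.exp (α * τ t) * (p.2 - q.2)| := by
            rw [sub_eq_add_neg]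
            refine le_trans (abs_add_le _ _) ?_
            rw [abs_neg, abs_neg]
        _ = |lam| * |p.1 - q.1| + c * Real.exp (α * τ t) * |p.2 - q.2| := by
            rw [abs_mul, abs_mul, abs_mul, abs_of_pos hc,
              abs_of_pos (Real.exp_pos _)]
        _ ≤ |lam| * max |p.1 - q.1| |p.2 - q.2| + c * A * max |p.1 - q.1| |p.2 - q.2| := by
            gcongr <;> first | exact hd1 | exact hd2 | exact hE1 | exact (Real.exp_pos _).le | positivity
        _ ≤ (|lam| + c * A + A) * max |p.1 - q.1| |p.2 - q.2| := by nlinarith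
    · have : Real.exp (-(α * τ t)) * p.1 - Real.exp (-(α * τ t)) * q.1
          = Real.exp (-(α * τ t)) * (p.1 - q.1) := by ring
      rw [this, abs_mul, abs_of_pos (Real.exp_pos _)]
      calc Real.exp (-(α * τ t)) * |p.1 - q.1|
          ≤ A * max |p.1 - q.1| |p.2 - q.2| := by
            gcongr <;> first | exact hd1 | exact hE2 | exact (Real.exp_pos _).le | positivity
        _ ≤ (|lam| + c * A + A) * max |p.1 - q.1| |p.2 - q.2| := by
            nlinarith [mul_nonneg (by positivity : (0:ℝ) ≤ |lam| + c * A) hDnn]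
  -- solution pairs
  set P : ℝ → ℝ × ℝ := fun t => (x t, F t) with hP
  set Q : ℝ → ℝ × ℝ := fun t => (y t, g2 t) with hQ
  have hτeq : ∀ t ∈ Set.Icc (0:ℝ) T, τ t = t := by
    intro t ht
    simp only [hτ]
    rw [min_eq_left ht.2, max_eq_right ht.1]
  have huIcc : Set.uIcc (0:ℝ) T = Set.Icc 0 T := Set.uIcc_of_le hT
  have hFc : ContinuousOn F (Set.Icc 0 T) := by
    rw [← huIcc]
    apply intervalIntegral.continuousOn_primitive_interval
    rw [huIcc]
    exact (hhc.mono Set.Icc_subset_Ici_self).integrableOn_compact isCompact_Icc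
  have hPc : ContinuousOn P (Set.Icc 0 T) :=
    (hxc.mono Set.Icc_subset_Ici_self).prodMk hFc
  have hP' : ∀ t ∈ Set.Ico (0:ℝ) T, HasDerivWithinAt P (v t (P t)) (Set.Ici t) t := by
    intro t ht
    have ht0 : (0:ℝ) ≤ t := ht.1
    have hsub : Set.Ici t ⊆ Set.Ici (0:ℝ) := Set.Ici_subset_Ici.mpr ht0
    have hFd : HasDerivWithinAt F (h t) (Set.Ici t) t := by
      apply intervalIntegral.integral_hasDerivWithinAt_right
      · apply ContinuousOn.intervalIntegrable
        apply hhc.mono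
        rw [Set.uIcc_of_le ht0]
        exact Set.Icc_subset_Ici_self
      · exact ⟨Set.Ici 0, Filter.mem_of_superset self_mem_nhdsWithin
          (Set.Ioi_subset_Ici_self.trans hsub),
          hhc.aestronglyMeasurable measurableSet_Ici⟩
      · exact (hhc t (Set.mem_Ici.mpr ht0)).mono (Set.Ioi_subset_Ici_self.trans hsub)
    have hxd' : HasDerivWithinAt x (x' t) (Set.Ici t) t := (hxd t ht0).mono hsub
    have hpair := hxd'.prodMk hFd
    have hτt : τ t = t := hτeq t ⟨ht.1, ht.2.le⟩
    have hint : (∫ s in (0:ℝ)..t, c * Real.exp (α * (t - s)) * x s)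
        = c * Real.exp (α * t) * F t := by
      simp only [hF]
      rw [← intervalIntegral.integral_const_mul]
      apply intervalIntegral.integral_congr
      intro s _
      show c * Real.exp (α * (t - s)) * x s = c * Real.exp (α * t) * (Real.exp (-(α * s)) * x s)
      have : Real.exp (α * t) * Real.exp (-(α * s)) = Real.exp (α * (t - s)) := by
        rw [← Real.exp_add]
        ring_nf
      rw [← this]
      ring
    have hx'eq : x' t = -(lam * x t) - c * Real.exp (α * t) * F t := by
      have h1 := heq t ht0
      simp only at h1
      rw [hint] at h1
      linarith
    convert hpair using 1
    simp only [hv_def, hP, hτt]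
    exact Prod.ext hx'eq.symm rfl
  -- candidate pair
  have hQc : ContinuousOn Q (Set.Icc 0 T) := by
    apply ContinuousOn.prodMk <;> · apply Continuous.continuousOn; fun_prop
  have hyd : ∀ t : ℝ, HasDerivAt y
      (((wp - α) * (Real.exp (wp * t) * wp) - (wm - α) * (Real.exp (wm * t) * wm)) / (wp - wm)) t := by
    intro t
    have e1 : HasDerivAt (fun u : ℝ => Real.exp (wp * u)) (Real.exp (wp * t) * wp) t := by
      simpa using ((hasDerivAt_id t).const_mul wp).exp
    have e2 : HasDerivAt (fun u : ℝ => Real.exp (wm * u)) (Real.exp (wm * t) * wm) t := by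
      simpa using ((hasDerivAt_id t).const_mul wm).exp
    exact ((e1.const_mul (wp - α)).sub (e2.const_mul (wm - α))).div_const (wp - wm)
  have hg2d : ∀ t : ℝ, HasDerivAt g2
      ((Real.exp ((wp - α) * t) * (wp - α) - Real.exp ((wm - α) * t) * (wm - α)) / (wp - wm)) t := by
    intro t
    have e1 : HasDerivAt (fun u : ℝ => Real.exp ((wp - α) * u)) (Real.exp ((wp - α) * t) * (wp - α)) t := by
      simpa using ((hasDerivAt_id t).const_mul (wp - α)).exp
    have e2 : HasDerivAt (fun u : ℝ => Real.exp ((wm - α) * u)) (Real.exp ((wm - α) * t) * (wm - α)) t := by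
      simpa using ((hasDerivAt_id t).const_mul (wm - α)).exp
    exact (e1.sub e2).div_const (wp - wm)
  have hQ' : ∀ t ∈ Set.Ico (0:ℝ) T, HasDerivWithinAt Q (v t (Q t)) (Set.Ici t) t := by
    intro t ht
    have hτt : τ t = t := hτeq t ⟨ht.1, ht.2.le⟩
    have hpair : HasDerivWithinAt Q (_ : ℝ × ℝ) (Set.Ici t) t :=
      ((hyd t).prodMk (hg2d t)).hasDerivWithinAt (s := Set.Ici t)
    convert hpair using 1
    simp only [hv_def, hQ, hτt]
    have hEp : Real.exp ((wp - α) * t) = Real.exp (wp * t) * Real.exp (-(α * t)) := by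
      rw [← Real.exp_add]; ring_nf
    have hEm : Real.exp ((wm - α) * t) = Real.exp (wm * t) * Real.exp (-(α * t)) := by
      rw [← Real.exp_add]; ring_nf
    have hEa : Real.exp (α * t) * Real.exp (-(α * t)) = 1 := by
      rw [← Real.exp_add]; simp
    refine Prod.ext ?_ ?_
    · show -(lam * y t) - c * Real.exp (α * t) * g2 t
        = ((wp - α) * (Real.exp (wp * t) * wp) - (wm - α) * (Real.exp (wm * t) * wm)) / (wp - wm)
      simp only [hy, hg2, hEp, hEm]
      linear_combination ((Real.exp (wm * t)) * hkm - (Real.exp (wp * t)) * hkp +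
        c * (Real.exp (wm * t) - Real.exp (wp * t)) * hEa) / (wp - wm)
    · show Real.exp (-(α * t)) * y t
        = (Real.exp ((wp - α) * t) * (wp - α) - Real.exp ((wm - α) * t) * (wm - α)) / (wp - wm)
      simp only [hy, hEp, hEm]
      ring
  have h0 : P 0 = Q 0 := by
    refine Prod.ext ?_ ?_
    · show x 0 = y 0
      simp only [hx0, hy, mul_zero, Real.exp_zero, mul_one]
      field_simp
      ring
    · show F 0 = g2 0
      simp only [hF, hg2, intervalIntegral.integral_same, mul_zero, Real.exp_zero]
      simp
  have key := ODE_solution_unique_of_mem_Icc_right (v := v)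
    (s := fun _ => (Set.univ : Set (ℝ × ℝ))) (fun t _ => hvlip t) hPc hP'
    (fun _ _ => trivial) hQc hQ' (fun _ _ => trivial) h0
  have hPT := key (Set.right_mem_Icc.mpr hT)
  have := congrArg Prod.fst hPT
  simpa [hP, hQ, hy] using this
end
end

section
/- Let c > 0, α ∈ ℝ, λ ∈ ℝ, and assume (λ+α)² − 4c = 0. Then the unique solution x of the memory ODE with kernel M(t) = c·e^{αt} and parameter λ is given by x(t) = (1 − (λ+α)·t/2)·e^{−(λ−α)·t/2} for all t ≥ 0. -/
noncomputable section

def fsol (lam α : ℝ) (t : ℝ) : ℝ := (1 - (lam + α) * t / 2) * Real.exp (-((lam - α) * t / 2))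
def gsol (c lam α : ℝ) (t : ℝ) : ℝ := -(c * t * Real.exp (-((lam - α) * t / 2)))

lemma exp_hasDerivAt (m t : ℝ) :
    HasDerivAt (fun t : ℝ => Real.exp (-(m * t / 2))) (Real.exp (-(m * t / 2)) * (-(m / 2))) t := by
  have h : HasDerivAt (fun t : ℝ => -(m * t / 2)) (-(m / 2)) t := by
    exact ((((hasDerivAt_id t).const_mul m).div_const 2).neg).congr_deriv (by ring)
  exact h.exp

lemma fsol_hasDerivAt (c lam α : ℝ) (hs : (lam + α) ^ 2 - 4 * c = 0) (t : ℝ) :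
    HasDerivAt (fsol lam α) (gsol c lam α t - lam * fsol lam α t) t := by
  have h1 : HasDerivAt (fun t : ℝ => 1 - (lam + α) * t / 2) (-((lam + α) / 2)) t := by
    simpa using (((hasDerivAt_id t).const_mul (lam + α)).div_const 2).const_sub 1
  have := h1.mul (exp_hasDerivAt (lam - α) t)
  refine this.congr_deriv (Eq.symm ?_)
  unfold fsol gsol
  linear_combination (Real.exp (-((lam - α) * t / 2)) * t / 4) * hs

lemma gsol_hasDerivAt (c lam α : ℝ) (t : ℝ) :
    HasDerivAt (gsol c lam α) (α * gsol c lam α t - c * fsol lam α t) t := by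
  have h1 : HasDerivAt (fun t : ℝ => c * t) c t := by
    simpa using (hasDerivAt_id t).const_mul c
  have := (h1.mul (exp_hasDerivAt (lam - α) t)).neg
  refine this.congr_deriv (Eq.symm ?_)
  unfold fsol gsol
  ring


/-- Explicit solution of the memory ODE with kernel `c·e^{αt}` when the discriminant
`(λ+α)² − 4c` vanishes. -/
theorem stmt12 (c α lam : ℝ) (hc : 0 < c)
    (hs : (lam + α) ^ 2 - 4 * c = 0)
    (x x' : ℝ → ℝ) (hx : MemSol (fun t => c * Real.exp (α * t)) lam x x') :
    ∀ t ≥ (0:ℝ),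
      x t = (1 - (lam + α) * t / 2) * Real.exp (-((lam - α) * t / 2)) := by
  obtain ⟨hx0, hx'c, hxd, heq⟩ := hx
  have hxc : ContinuousOn x (Set.Ici 0) := fun t ht => (hxd t ht).continuousWithinAt
  -- the auxiliary integrand and integral
  set h : ℝ → ℝ := fun s => Real.exp (-(α * s)) * x s with hh
  have hhc : ContinuousOn h (Set.Ici 0) :=
    (Real.continuous_exp.comp (continuous_const.mul continuous_id).neg).continuousOn.mul hxc
  set I : ℝ → ℝ := fun t => ∫ s in (0:ℝ)..t, h s with hI
  have hInt : ∀ t ≥ (0:ℝ), IntervalIntegrable h MeasureTheory.volume 0 t := by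
    intro t ht
    exact (hhc.mono (by rw [Set.uIcc_of_le ht]; exact Set.Icc_subset_Ici_self)).intervalIntegrable
  have hIderiv : ∀ t ∈ Set.Ici (0:ℝ), HasDerivWithinAt I (h t) (Set.Ici 0) t := by
    intro t ht
    rcases eq_or_lt_of_le (Set.mem_Ici.mp ht) with h0 | h0
    · subst h0
      exact intervalIntegral.integral_hasDerivWithinAt_right (hInt 0 le_rfl)
        ((hhc.mono Set.Ioi_subset_Ici_self).stronglyMeasurableAtFilter_nhdsWithin
          measurableSet_Ioi 0)
        ((hhc 0 Set.self_mem_Ici).mono Set.Ioi_subset_Ici_self)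
    · have hco : ContinuousOn h (Set.Ioi 0) := hhc.mono Set.Ioi_subset_Ici_self
      exact (intervalIntegral.integral_hasDerivAt_right (hInt t h0.le)
        (hco.stronglyMeasurableAtFilter isOpen_Ioi t h0)
        (hco.continuousAt (Ioi_mem_nhds h0))).hasDerivWithinAt
  -- rewrite the memory equation
  set u : ℝ → ℝ := fun t => -(c * (Real.exp (α * t) * I t)) with hu
  have hx' : ∀ t ∈ Set.Ici (0:ℝ), x' t = u t - lam * x t := by
    intro t ht
    have h1 := heq t ht
    have h2 : (∫ s in (0:ℝ)..t, c * Real.exp (α * (t - s)) * x s)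
        = c * Real.exp (α * t) * I t := by
      rw [hI]
      rw [← intervalIntegral.integral_const_mul]
      apply intervalIntegral.integral_congr
      intro s _
      simp only [hh]
      rw [mul_sub, Real.exp_sub, Real.exp_neg]
      ring
    simp only at h1
    rw [h2] at h1
    simp only [hu]
    linarith
  have huderiv : ∀ t ∈ Set.Ici (0:ℝ), HasDerivWithinAt u (α * u t - c * x t) (Set.Ici 0) t := by
    intro t ht
    have hexp : HasDerivWithinAt (fun t : ℝ => Real.exp (α * t)) (Real.exp (α * t) * α)
        (Set.Ici 0) t := by
      simpa using (((hasDerivAt_id t).const_mul α).exp).hasDerivWithinAt (s := Set.Ici 0)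
    have := ((hexp.mul (hIderiv t ht)).const_mul c).neg
    refine this.congr_deriv (Eq.symm ?_)
    simp only [hu, hh]
    have h1 : Real.exp (α * t) * Real.exp (-(α * t)) = 1 := by
      rw [← Real.exp_add]; simp
    linear_combination (c * x t) * h1
  -- the linear vector field
  set L : ℝ × ℝ →L[ℝ] ℝ × ℝ :=
    ((ContinuousLinearMap.snd ℝ ℝ ℝ) - lam • (ContinuousLinearMap.fst ℝ ℝ ℝ)).prod
      (α • (ContinuousLinearMap.snd ℝ ℝ ℝ) - c • (ContinuousLinearMap.fst ℝ ℝ ℝ)) with hL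
  have hLapp : ∀ p : ℝ × ℝ, L p = (p.2 - lam * p.1, α * p.2 - c * p.1) := by
    intro p; simp [hL]
  -- the two trajectories
  set F : ℝ → ℝ × ℝ := fun t => (x t, u t) with hF
  set G : ℝ → ℝ × ℝ := fun t => (fsol lam α t, gsol c lam α t) with hG
  intro T hT
  have key : Set.EqOn F G (Set.Icc 0 T) := by
    apply ODE_solution_unique_of_mem_Icc_right (v := fun _ p => L p)
      (s := fun _ => Set.univ) (K := ‖L‖₊)
    · intro t _
      exact L.lipschitz.lipschitzOnWith
    · intro t ht
      exact ((hxc t ht.1).mono (Set.Icc_subset_Ici_self)).prodMk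
        (((huderiv t ht.1).continuousWithinAt).mono (Set.Icc_subset_Ici_self))
    · intro t ht
      have hd := ((hxd t ht.1).prodMk (huderiv t ht.1)).mono
        (Set.Ici_subset_Ici.mpr ht.1)
      rw [hLapp]
      simp only [hF]
      rw [← hx' t ht.1]
      exact hd
    · intro t _; trivial
    · intro t _
      exact (((fsol_hasDerivAt c lam α hs t).continuousAt).continuousWithinAt).prodMk
        (((gsol_hasDerivAt c lam α t).continuousAt).continuousWithinAt)
    · intro t _
      rw [hLapp]
      exact (((fsol_hasDerivAt c lam α hs t).prodMk (gsol_hasDerivAt c lam α t))).hasDerivWithinAt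
    · intro t _; trivial
    · simp only [hF, hG, hu, hI]
      rw [intervalIntegral.integral_same]
      simp [hx0, fsol, gsol]
  have := key (Set.right_mem_Icc.mpr hT)
  have h1 : x T = fsol lam α T := congrArg Prod.fst this
  rw [h1]; rfl
end
end

section
/- Let c > 0, α ∈ ℝ, λ ∈ ℝ, set s = (λ+α)² − 4c, and assume s < 0. Put β = √(−s)/2. Then the unique solution x of the memory ODE with kernel M(t) = c·e^{αt} and parameter λ is given by x(t) = e^{−(λ−α)·t/2}·[cos(βt) − ((λ+α)/(2β))·sin(βt)] for all t ≥ 0. -/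
noncomputable section

set_option maxHeartbeats 1000000 in
/-- Explicit solution of the memory ODE with kernel `c·e^{αt}` when the discriminant
`s = (λ+α)² − 4c` is negative, with `β = √(−s)/2`. -/
theorem stmt13 (c α lam : ℝ) (hc : 0 < c)
    (hs : (lam + α) ^ 2 - 4 * c < 0)
    (β : ℝ) (hβ : β = Real.sqrt (-((lam + α) ^ 2 - 4 * c)) / 2)
    (x x' : ℝ → ℝ) (hx : MemSol (fun t => c * Real.exp (α * t)) lam x x') :
    ∀ t ≥ (0:ℝ),
      x t = Real.exp (-((lam - α) * t / 2)) *
        (Real.cos (β * t) - ((lam + α) / (2 * β)) * Real.sin (β * t)) := by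
  obtain ⟨hx0, hx'c, hxd, heq⟩ := hx
  have hβpos : 0 < β := by
    rw [hβ]
    exact div_pos (Real.sqrt_pos.mpr (by linarith)) two_pos
  have hβne : β ≠ 0 := ne_of_gt hβpos
  have hβsq : β ^ 2 = (4 * c - (lam + α) ^ 2) / 4 := by
    rw [hβ, div_pow, Real.sq_sqrt (by linarith)]
    ring
  -- the candidate solution and its derivative
  obtain ⟨k, hkval, hkβ⟩ : ∃ k : ℝ, k = (lam + α) / (2 * β) ∧ k * β = (lam + α) / 2 :=
    ⟨(lam + α) / (2 * β), rfl, by field_simp⟩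
  set g : ℝ → ℝ := fun u => Real.exp (-((lam - α) * u / 2)) *
      (Real.cos (β * u) - k * Real.sin (β * u)) with hg
  set g1 : ℝ → ℝ := fun u => Real.exp (-((lam - α) * u / 2)) *
      (-lam * Real.cos (β * u) + ((lam - α) / 2 * k - β) * Real.sin (β * u)) with hg1
  have hE : ∀ u : ℝ, HasDerivAt (fun v => Real.exp (-((lam - α) * v / 2)))
      (Real.exp (-((lam - α) * u / 2)) * (-((lam - α) / 2))) u := by
    intro u
    have h1 : HasDerivAt (fun v : ℝ => -((lam - α) * v / 2)) (-((lam - α) / 2)) u := by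
      have h := (((hasDerivAt_id u).const_mul (lam - α)).div_const 2).neg
      simp only [id_eq, id, mul_one] at h
      exact h
    simpa using h1.exp
  have hC : ∀ u : ℝ, HasDerivAt (fun v => Real.cos (β * v)) (-Real.sin (β * u) * β) u := by
    intro u
    simpa using ((hasDerivAt_id u).const_mul β).cos
  have hS : ∀ u : ℝ, HasDerivAt (fun v => Real.sin (β * v)) (Real.cos (β * u) * β) u := by
    intro u
    simpa using ((hasDerivAt_id u).const_mul β).sin
  have hgd : ∀ u : ℝ, HasDerivAt g (g1 u) u := by
    intro u
    have := (hE u).mul ((hC u).sub ((hS u).const_mul k))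
    refine this.congr_deriv (Eq.symm ?_)
    simp only [hg1, Pi.sub_apply]
    linear_combination (Real.exp (-((lam - α) * u / 2)) * Real.cos (β * u)) * hkβ
  have hg1d : ∀ u : ℝ, HasDerivAt g1 ((α * lam - c) * g u + (α - lam) * g1 u) u := by
    intro u
    have := (hE u).mul (((hC u).const_mul (-lam)).add ((hS u).const_mul ((lam - α) / 2 * k - β)))
    refine this.congr_deriv (Eq.symm ?_)
    simp only [hg, hg1, Pi.add_apply]
    linear_combination
      (Real.exp (-((lam - α) * u / 2)) * Real.cos (β * u)) *
        ((-(lam - α) / 2) * hkβ + hβsq) +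
      (Real.exp (-((lam - α) * u / 2)) * Real.sin (β * u)) *
        ((-k) * hβsq + β * hkβ)
  -- continuity of x
  have hxc : ContinuousOn x (Set.Ici 0) := fun s hs => (hxd s hs).continuousWithinAt
  set f₀ : ℝ → ℝ := fun s => Real.exp (-(α * s)) * x s with hf₀
  have hf₀c : ContinuousOn f₀ (Set.Ici 0) :=
    ((Real.continuous_exp.comp (continuous_const.mul continuous_id).neg).continuousOn).mul hxc
  set I : ℝ → ℝ := fun u => ∫ s in (0:ℝ)..u, f₀ s with hI
  have hx'eq : ∀ u ∈ Set.Ici (0:ℝ), x' u = -(lam * x u) - c * (Real.exp (α * u) * I u) := by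
    intro u hu
    have h1 := heq u hu
    have h2 : (∫ s in (0:ℝ)..u, c * Real.exp (α * (u - s)) * x s)
        = c * (Real.exp (α * u) * I u) := by
      have h3 : (∫ s in (0:ℝ)..u, c * Real.exp (α * (u - s)) * x s)
          = ∫ s in (0:ℝ)..u, (c * Real.exp (α * u)) * f₀ s := by
        apply intervalIntegral.integral_congr
        intro s _
        simp only [hf₀]
        rw [show α * (u - s) = α * u + -(α * s) by ring, Real.exp_add]
        ring
      rw [h3, intervalIntegral.integral_const_mul, hI]
      ring
    simp only at h1
    rw [h2] at h1
    linarith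
  have hx'0 : x' 0 = -lam := by
    have h := hx'eq 0 (Set.mem_Ici.mpr le_rfl)
    rw [hI] at h
    simp [hx0, intervalIntegral.integral_same] at h
    linarith
  -- the vector field
  set L : ℝ × ℝ →L[ℝ] ℝ × ℝ :=
    (ContinuousLinearMap.snd ℝ ℝ ℝ).prod
      ((α * lam - c) • ContinuousLinearMap.fst ℝ ℝ ℝ +
        (α - lam) • ContinuousLinearMap.snd ℝ ℝ ℝ) with hL
  set v : ℝ → ℝ × ℝ → ℝ × ℝ :=
    fun _ p => (p.2, (α * lam - c) * p.1 + (α - lam) * p.2) with hv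
  have hvL : ∀ t : ℝ, LipschitzWith ‖L‖₊ (v t) := by
    intro t
    have hvl : v t = ⇑L := by
      funext p
      simp [hv, hL, ContinuousLinearMap.prod_apply, smul_eq_mul]
    rw [hvl]
    exact L.lipschitz
  intro T hT
  -- derivatives of the pair (x, x')
  have hF' : ∀ t ∈ Set.Ico 0 T,
      HasDerivWithinAt (fun u => (x u, x' u)) (v t (x t, x' t)) (Set.Ici t) t := by
    intro t ht
    have ht0 : (0:ℝ) ≤ t := ht.1
    have hsub : Set.Ici t ⊆ Set.Ici (0:ℝ) := Set.Ici_subset_Ici.mpr ht0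
    have hx1 : HasDerivWithinAt x (x' t) (Set.Ici t) t := (hxd t ht0).mono hsub
    have hint : IntervalIntegrable f₀ MeasureTheory.volume 0 t :=
      (hf₀c.mono (by rw [Set.uIcc_of_le ht0]; exact Set.Icc_subset_Ici_self)).intervalIntegrable
    have hmeas : StronglyMeasurableAtFilter f₀ (nhdsWithin t (Set.Ioi t)) :=
      ⟨Set.Ici 0, Filter.mem_of_superset self_mem_nhdsWithin
          (fun s hs => le_trans ht0 (le_of_lt hs)),
        hf₀c.aestronglyMeasurable measurableSet_Ici⟩
    have hIcw : ContinuousWithinAt f₀ (Set.Ioi t) t :=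
      (hf₀c t ht0).mono (fun s hs => le_trans ht0 (le_of_lt hs))
    have hId : HasDerivWithinAt I (f₀ t) (Set.Ici t) t :=
      intervalIntegral.integral_hasDerivWithinAt_right hint hmeas hIcw
    have hexp : HasDerivWithinAt (fun u => Real.exp (α * u)) (Real.exp (α * t) * α)
        (Set.Ici t) t := by
      have : HasDerivAt (fun u : ℝ => Real.exp (α * u)) (Real.exp (α * t) * α) t := by
        simpa using ((hasDerivAt_id t).const_mul α).exp
      exact this.hasDerivWithinAt
    have hr : HasDerivWithinAt (fun u => -(lam * x u) - c * (Real.exp (α * u) * I u))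
        (-(lam * x' t) - c * ((Real.exp (α * t) * α) * I t + Real.exp (α * t) * f₀ t))
        (Set.Ici t) t :=
      ((hx1.const_mul lam).neg).sub ((hexp.mul hId).const_mul c)
    have hx'd : HasDerivWithinAt x'
        (-(lam * x' t) - c * ((Real.exp (α * t) * α) * I t + Real.exp (α * t) * f₀ t))
        (Set.Ici t) t :=
      hr.congr (fun u hu => hx'eq u (hsub hu)) (hx'eq t ht0)
    have hE2 : Real.exp (α * t) * f₀ t = x t := by
      simp only [hf₀]
      rw [← mul_assoc, ← Real.exp_add]
      simp
    have hE3 : c * (Real.exp (α * t) * I t) = -(x' t) - lam * x t := by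
      have := hx'eq t ht0
      linarith
    have hval : -(lam * x' t) - c * ((Real.exp (α * t) * α) * I t + Real.exp (α * t) * f₀ t)
        = (α * lam - c) * x t + (α - lam) * x' t := by
      linear_combination -α * hE3 - c * hE2
    rw [hval] at hx'd
    exact hx1.prodMk hx'd
  have hG' : ∀ t ∈ Set.Ico 0 T,
      HasDerivWithinAt (fun u => (g u, g1 u)) (v t (g t, g1 t)) (Set.Ici t) t := by
    intro t _
    exact ((hgd t).hasDerivWithinAt).prodMk ((hg1d t).hasDerivWithinAt)
  have hFc : ContinuousOn (fun u => (x u, x' u)) (Set.Icc 0 T) :=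
    (hxc.mono Set.Icc_subset_Ici_self).prodMk (hx'c.mono Set.Icc_subset_Ici_self)
  have hGc : ContinuousOn (fun u => (g u, g1 u)) (Set.Icc 0 T) :=
    Continuous.continuousOn ((continuous_iff_continuousAt.mpr
        (fun u => (hgd u).continuousAt)).prodMk
      (continuous_iff_continuousAt.mpr (fun u => (hg1d u).continuousAt)))
  have hinit : (fun u => (x u, x' u)) 0 = (fun u => (g u, g1 u)) 0 := by
    have hg0 : g 0 = 1 := by simp [hg]
    have hg10 : g1 0 = -lam := by simp [hg1]
    simp only
    rw [hx0, hx'0, hg0, hg10]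
  have huniq := ODE_solution_unique hvL hFc hF' hGc hG' hinit ⟨hT, le_rfl⟩
  have hxT : x T = g T := congrArg Prod.fst huniq
  rw [hxT, hg]
  simp only
  rw [hkval]
end
end

section
/- Let c > 0, α ∈ ℝ, λ ∈ ℝ, set s = (λ+α)² − 4c, and assume s > 0. Define w⁺ = (−(λ−α) + √s)/2 and w⁻ = (−(λ−α) − √s)/2. Then (w⁺−α)·(w⁻−α) = c > 0 (so the ratio (w⁻−α)/(w⁺−α) is positive), and the unique solution x of the memory ODE with kernel M(t) = c·e^{αt} and parameter λ satisfies, for every t > 0: x(t) = 0 if and only if t = (w⁺ − w⁻)^{−1} · ln[(w⁻−α)/(w⁺−α)]. -/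
noncomputable section

open Set intervalIntegral Real

lemma mem_unique (c α lam : ℝ) (x x' f f' G : ℝ → ℝ)
    (hx : MemSol (fun t => c * Real.exp (α * t)) lam x x')
    (hf : ∀ t, HasDerivAt f (f' t) t)
    (hG : ∀ t, HasDerivAt G (f t + α * G t) t)
    (hfeq : ∀ t, f' t = -lam * f t - c * G t)
    (hf0 : f 0 = 1) (hG0 : G 0 = 0) :
    ∀ t ≥ (0:ℝ), x t = f t := by
  obtain ⟨hx0, hx'c, hxd, hxeq⟩ := hx
  have hxc : ContinuousOn x (Ici 0) := fun t ht => (hxd t ht).continuousWithinAt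
  set I : ℝ → ℝ := fun s => Real.exp (-(α * s)) * x s with hI
  have hIc : ContinuousOn I (Ici 0) :=
    ((Real.continuous_exp.comp (continuous_mul_left α).neg).continuousOn).mul hxc
  set z : ℝ → ℝ := fun t => ∫ s in (0:ℝ)..t, I s with hz
  set g : ℝ → ℝ := fun t => Real.exp (α * t) * z t with hg
  -- integrability
  have hint : ∀ t ≥ (0:ℝ), IntervalIntegrable I MeasureTheory.volume 0 t := by
    intro t ht
    apply ContinuousOn.intervalIntegrable
    apply hIc.mono
    rw [uIcc_of_le ht]
    exact fun u hu => hu.1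
  -- key: the memory integral equals c * g t
  have hkey : ∀ t ≥ (0:ℝ), (∫ s in (0:ℝ)..t, c * Real.exp (α * (t - s)) * x s) = c * g t := by
    intro t _
    have : ∀ s : ℝ, c * Real.exp (α * (t - s)) * x s
        = (c * Real.exp (α * t)) * I s := by
      intro s
      have : Real.exp (α * (t - s)) = Real.exp (α * t) * Real.exp (-(α * s)) := by
        rw [← Real.exp_add]; ring_nf
      rw [this, hI]; ring
    calc (∫ s in (0:ℝ)..t, c * Real.exp (α * (t - s)) * x s)
        = ∫ s in (0:ℝ)..t, (c * Real.exp (α * t)) * I s := by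
          simp only [this]
      _ = (c * Real.exp (α * t)) * z t := intervalIntegral.integral_const_mul _ _
      _ = c * g t := by rw [hg]; ring
  -- derivative of z within Ici t
  have hzd : ∀ t ≥ (0:ℝ), HasDerivWithinAt z (I t) (Ici t) t := by
    intro t ht
    have hmeas : StronglyMeasurableAtFilter I (nhdsWithin t (Ioi t)) MeasureTheory.volume := by
      refine (hIc.stronglyMeasurableAtFilter_nhdsWithin measurableSet_Ici t).filter_mono ?_
      exact nhdsWithin_mono _ (fun u hu => le_of_lt (lt_of_le_of_lt ht hu))
    have hcw : ContinuousWithinAt I (Ioi t) t := by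
      apply (hIc t ht).mono
      exact fun u hu => le_of_lt (lt_of_le_of_lt ht hu)
    exact intervalIntegral.integral_hasDerivWithinAt_right (hint t ht) hmeas hcw
  -- derivative of g within Ici t
  have hgd : ∀ t ≥ (0:ℝ), HasDerivWithinAt g (x t + α * g t) (Ici t) t := by
    intro t ht
    have he : HasDerivAt (fun u => Real.exp (α * u)) (Real.exp (α * t) * α) t := by
      simpa using ((hasDerivAt_id t).const_mul α).exp
    have : HasDerivWithinAt (fun u => Real.exp (α * u) * z u)
        (Real.exp (α * t) * α * z t + Real.exp (α * t) * I t) (Ici t) t :=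
      (he.hasDerivWithinAt).mul (hzd t ht)
    convert this using 1
    have h1 : Real.exp (α * t) * Real.exp (-(α * t)) = 1 := by
      rw [← Real.exp_add]; simp
    rw [hg, hI]
    simp only
    linear_combination (-(x t)) * h1
  -- the linear vector field
  set L : (ℝ × ℝ) →L[ℝ] (ℝ × ℝ) :=
    (((-lam) • ContinuousLinearMap.fst ℝ ℝ ℝ + (-c) • ContinuousLinearMap.snd ℝ ℝ ℝ).prod
      (ContinuousLinearMap.fst ℝ ℝ ℝ + α • ContinuousLinearMap.snd ℝ ℝ ℝ)) with hL
  have hLval : ∀ p : ℝ × ℝ, L p = (-lam * p.1 - c * p.2, p.1 + α * p.2) := by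
    intro p
    simp only [hL, ContinuousLinearMap.prod_apply, ContinuousLinearMap.add_apply,
      ContinuousLinearMap.coe_smul', Pi.smul_apply, ContinuousLinearMap.coe_fst',
      ContinuousLinearMap.coe_snd', smul_eq_mul, Prod.mk.injEq]
    exact ⟨by ring, trivial⟩
  -- solutions
  have main : ∀ T ≥ (0:ℝ), Set.EqOn (fun t => (x t, g t)) (fun t => (f t, G t)) (Icc 0 T) := by
    intro T hT
    apply ODE_solution_unique_of_mem_Icc_right
      (v := fun _ p => L p) (K := ‖L‖₊) (s := fun _ => (univ : Set (ℝ × ℝ)))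
    · intro t _
      exact L.lipschitz.lipschitzOnWith
    · -- continuity of (x, g) on Icc 0 T
      apply ContinuousOn.prodMk
      · exact hxc.mono (fun u hu => hu.1)
      · apply ContinuousOn.mul
        · exact (Real.continuous_exp.comp (continuous_mul_left α)).continuousOn
        · have := intervalIntegral.continuousOn_primitive_interval'
            (μ := MeasureTheory.volume) (hint T hT) (a := 0) (by simp [uIcc_of_le hT, hT])
          exact this.mono (by rw [uIcc_of_le hT])
    · intro t htm
      have ht : (0:ℝ) ≤ t := htm.1
      have hx'val : x' t = -lam * x t - c * g t := by
        have := hxeq t ht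
        rw [hkey t ht] at this
        linarith
      show HasDerivWithinAt (fun t => (x t, g t)) (L (x t, g t)) (Ici t) t
      have goal' : L (x t, g t) = (x' t, x t + α * g t) := by
        rw [hLval]; rw [hx'val]
      rw [goal']
      exact ((hxd t ht).mono (Ici_subset_Ici.2 ht)).prodMk (hgd t ht)
    · intro t _; trivial
    · exact (ContinuousOn.prodMk (fun t _ => (hf t).continuousAt.continuousWithinAt)
        (fun t _ => (hG t).continuousAt.continuousWithinAt))
    · intro t _
      show HasDerivWithinAt (fun t => (f t, G t)) (L (f t, G t)) (Ici t) t
      have goal' : L (f t, G t) = (f' t, f t + α * G t) := by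
        rw [hLval]; rw [hfeq t]
      rw [goal']
      exact (hf t).hasDerivWithinAt.prodMk (hG t).hasDerivWithinAt
    · intro t _; trivial
    · simp [hx0, hf0, hG0, hg, hz]
  intro t ht
  have h2 := main t ht (show t ∈ Icc 0 t from ⟨ht, le_refl t⟩)
  exact congrArg Prod.fst h2


/-- In the positive-discriminant case, `(w⁺−α)(w⁻−α) = c > 0` and the unique zero of the
solution in `(0,∞)` is `(w⁺−w⁻)⁻¹·ln[(w⁻−α)/(w⁺−α)]`. -/
theorem stmt14 (c α lam : ℝ) (hc : 0 < c)
    (hs : 0 < (lam + α) ^ 2 - 4 * c)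
    (wp wm : ℝ)
    (hwp : wp = (-(lam - α) + Real.sqrt ((lam + α) ^ 2 - 4 * c)) / 2)
    (hwm : wm = (-(lam - α) - Real.sqrt ((lam + α) ^ 2 - 4 * c)) / 2)
    (x x' : ℝ → ℝ) (hx : MemSol (fun t => c * Real.exp (α * t)) lam x x') :
    (wp - α) * (wm - α) = c ∧
    (∀ t > (0:ℝ), (x t = 0 ↔ t = (wp - wm)⁻¹ * Real.log ((wm - α) / (wp - α)))) := by
  have hcne : c ≠ 0 := hc.ne'
  set σ := Real.sqrt ((lam + α) ^ 2 - 4 * c) with hσdef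
  have hσpos : 0 < σ := Real.sqrt_pos.2 hs
  have hσne : σ ≠ 0 := hσpos.ne'
  have hσ2 : σ ^ 2 = (lam + α) ^ 2 - 4 * c := Real.sq_sqrt hs.le
  have hAne' : σ - (lam + α) ≠ 0 := by
    intro h
    have : σ = lam + α := by linarith
    nlinarith [hσ2]
  have hBne' : σ + (lam + α) ≠ 0 := by
    intro h
    have : σ = -(lam + α) := by linarith
    nlinarith [hσ2]
  set A : ℝ := (σ - (lam + α)) / (2 * σ) with hA
  set B : ℝ := (σ + (lam + α)) / (2 * σ) with hB
  have hAne : A ≠ 0 := div_ne_zero hAne' (by positivity)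
  have hBne : B ≠ 0 := div_ne_zero hBne' (by positivity)
  set f : ℝ → ℝ := fun t => A * Real.exp (wp * t) + B * Real.exp (wm * t) with hfdef
  set f' : ℝ → ℝ := fun t => A * wp * Real.exp (wp * t) + B * wm * Real.exp (wm * t) with hf'def
  set G : ℝ → ℝ := fun t => (-(f' t) - lam * f t) / c with hGdef
  have hexp : ∀ (w t : ℝ), HasDerivAt (fun u => Real.exp (w * u)) (w * Real.exp (w * t)) t := by
    intro w t
    simpa [mul_comm] using ((hasDerivAt_id t).const_mul w).exp
  have hrp : wp ^ 2 + (lam - α) * wp + (c - α * lam) = 0 := by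
    rw [hwp]; linear_combination hσ2 / 4
  have hrm : wm ^ 2 + (lam - α) * wm + (c - α * lam) = 0 := by
    rw [hwm]; linear_combination hσ2 / 4
  have hf : ∀ t, HasDerivAt f (f' t) t := by
    intro t
    have : HasDerivAt (fun y => A * Real.exp (wp * y) + B * Real.exp (wm * y))
        (A * (wp * Real.exp (wp * t)) + B * (wm * Real.exp (wm * t))) t :=
      ((hexp wp t).const_mul A).add ((hexp wm t).const_mul B)
    convert this using 1
    simp [hf'def]; ring
  have hf'd : ∀ t, HasDerivAt f'
      (A * wp * (wp * Real.exp (wp * t)) + B * wm * (wm * Real.exp (wm * t))) t := by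
    intro t
    exact ((hexp wp t).const_mul (A * wp)).add ((hexp wm t).const_mul (B * wm))
  have hnum : ∀ t, (-(A * wp * (wp * Real.exp (wp * t)) + B * wm * (wm * Real.exp (wm * t)))
      - lam * f' t) = c * f t + α * (-(f' t) - lam * f t) := by
    intro t
    simp only [hf'def, hfdef]
    linear_combination (-(A * Real.exp (wp * t))) * hrp + (-(B * Real.exp (wm * t))) * hrm
  have hG : ∀ t, HasDerivAt G (f t + α * G t) t := by
    intro t
    have h0 := (((hf'd t).neg.sub ((hf t).const_mul lam)).div_const c)
    have h1 : (-(A * wp * (wp * Real.exp (wp * t)) + B * wm * (wm * Real.exp (wm * t)))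
        - lam * f' t) / c = f t + α * G t := by
      rw [hnum t]
      show (c * f t + α * (-(f' t) - lam * f t)) / c = f t + α * ((-(f' t) - lam * f t) / c)
      rw [add_div, mul_div_cancel_left₀ _ hcne, mul_div_assoc]
    rw [← h1]
    exact h0
  have hfeq : ∀ t, f' t = -lam * f t - c * G t := by
    intro t
    show f' t = -lam * f t - c * ((-(f' t) - lam * f t) / c)
    rw [mul_div_cancel₀ _ hcne]
    ring
  have hf0 : f 0 = 1 := by
    simp only [hfdef, hA, hB, mul_zero, Real.exp_zero, mul_one]
    field_simp
    ring
  have hf'0 : f' 0 = -lam := by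
    simp only [hf'def, mul_zero, Real.exp_zero, mul_one]
    rw [hA, hB, hwp, hwm]
    field_simp
    ring
  have hG0 : G 0 = 0 := by
    show (-(f' 0) - lam * f 0) / c = 0
    rw [hf'0, hf0]
    simp
  have hxf : ∀ t ≥ (0:ℝ), x t = f t :=
    mem_unique c α lam x x' f f' G hx hf hG hfeq hf0 hG0
  constructor
  · rw [hwp, hwm]; linear_combination (-1/4 : ℝ) * hσ2
  · intro t ht
    rw [hxf t ht.le]
    have hσw : wp - wm = σ := by rw [hwp, hwm]; ring
    have hee : Real.exp ((wp - wm) * t) * Real.exp (wm * t) = Real.exp (wp * t) := by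
      rw [← Real.exp_add]; ring_nf
    have hfact : f t = Real.exp (wm * t) * (A * Real.exp ((wp - wm) * t) + B) := by
      simp only [hfdef]
      rw [← hee]; ring
    have hABval : A * B = -c / σ ^ 2 := by
      have h1 : (σ - (lam + α)) * (σ + (lam + α)) = -(4 * c) := by linear_combination hσ2
      rw [hA, hB, div_mul_div_comm, h1]
      rw [div_eq_div_iff (by positivity) (by positivity)]
      ring
    have hABneg : A * B < 0 := by
      rw [hABval]
      apply div_neg_of_neg_of_pos (by linarith) (by positivity)
    have hBApos : 0 < -B / A := by
      have h1 : -B / A = -(A * B) / A ^ 2 := by field_simp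
      rw [h1]
      apply div_pos (by linarith) (by positivity)
    have hratio : (wm - α) / (wp - α) = -B / A := by
      have hwpα : wp - α ≠ 0 := by
        rw [hwp]
        intro h
        apply hAne'
        rw [hσdef]; linarith
      rw [div_eq_div_iff hwpα hAne, hwp, hwm, hA, hB]
      field_simp
      ring
    rw [hratio, hfact, mul_eq_zero]
    have hexpne : Real.exp (wm * t) ≠ 0 := Real.exp_ne_zero _
    constructor
    · intro h
      rcases h with h | h
      · exact absurd h hexpne
      · have hX : Real.exp ((wp - wm) * t) = -B / A := by
          rw [eq_div_iff hAne]
          linear_combination h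
        have hlog : (wp - wm) * t = Real.log (-B / A) := by
          rw [← hX, Real.log_exp]
        rw [← hlog, hσw, inv_mul_cancel_left₀ hσne]
    · intro h
      right
      have hteq : (wp - wm) * t = Real.log (-B / A) := by
        rw [hσw] at h ⊢
        rw [h, mul_inv_cancel_left₀ hσne]
      have hX : Real.exp ((wp - wm) * t) = -B / A := by
        rw [hteq, Real.exp_log hBApos]
      rw [hX]
      field_simp
      ring
end
end

section
/- Let c > 0, α ∈ ℝ, λ ∈ ℝ, and assume (λ+α)² − 4c = 0. Let x be the unique solution of the memory ODE with kernel M(t) = c·e^{αt} and parameter λ. Then: if λ + α ≤ 0, then x(t) ≠ 0 for all t > 0; and if λ + α > 0, then for t > 0, x(t) = 0 if and only if t = 2/(λ+α). -/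
noncomputable section

open Set Real MeasureTheory

lemma memsol_repr (c α lam : ℝ) (hc : 0 < c)
    (hs : (lam + α) ^ 2 - 4 * c = 0)
    (x x' : ℝ → ℝ) (hx : MemSol (fun t => c * Real.exp (α * t)) lam x x') :
    ∀ t ∈ Set.Ici (0:ℝ),
      x t = Real.exp ((α - lam)/2 * t) * (1 - (lam + α)/2 * t) := by
  obtain ⟨hx0, _hx'c, hxd, hxe⟩ := hx
  set b : ℝ := -((lam + α)/2) with hb
  set μ : ℝ := (α - lam)/2 with hμ
  have hcb : c = b ^ 2 := by rw [hb]; nlinarith [hs]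
  have hcontx : ContinuousOn x (Ici 0) := fun u hu => (hxd u hu).continuousWithinAt
  have hconth : ContinuousOn (fun s => Real.exp (-(α * s)) * x s) (Ici 0) :=
    ((Real.continuous_exp.comp (continuous_const.mul continuous_id).neg).continuousOn).mul hcontx
  intro T hT
  have hT0 : (0:ℝ) ≤ T := hT
  -- the ODE system's vector field, with time clamped to [0,T]
  set τ : ℝ → ℝ := fun u => min (max u 0) T with hτ
  have hτmem : ∀ u, τ u ∈ Icc (0:ℝ) T := fun u =>
    ⟨le_min (le_max_right _ _) hT0, min_le_right _ _⟩
  have hτeq : ∀ u ∈ Icc (0:ℝ) T, τ u = u := by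
    intro u hu
    simp only [hτ]
    rw [max_eq_left hu.1, min_eq_left hu.2]
  set C : ℝ := Real.exp (|α| * T) with hC
  have hexpb : ∀ u, Real.exp (α * τ u) ≤ C ∧ Real.exp (-(α * τ u)) ≤ C := by
    intro u
    have h1 : |α * τ u| ≤ |α| * T := by
      rw [abs_mul]
      have := hτmem u
      have : |τ u| ≤ T := by rw [abs_of_nonneg this.1]; exact this.2
      exact mul_le_mul_of_nonneg_left this (abs_nonneg α)
    constructor
    · exact Real.exp_le_exp.2 (le_trans (le_abs_self _) h1)
    · exact Real.exp_le_exp.2 (le_trans (neg_le_abs _) h1)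
  have hCpos : 0 < C := Real.exp_pos _
  set v : ℝ → ℝ × ℝ → ℝ × ℝ := fun u p =>
    (-(lam * p.1) - (c * Real.exp (α * τ u)) * p.2, Real.exp (-(α * τ u)) * p.1) with hv
  set K : NNReal := Real.toNNReal (|lam| + c * C + C) with hK
  have hKval : (K : ℝ) = |lam| + c * C + C := by
    rw [hK, Real.coe_toNNReal]
    positivity
  have hlip : ∀ u, LipschitzWith K (v u) := by
    intro u
    apply LipschitzWith.of_dist_le_mul
    intro p q
    rw [Prod.dist_eq, hKval]
    have hd1 : dist p.1 q.1 ≤ dist p q := le_max_left _ _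
    have hd2 : dist p.2 q.2 ≤ dist p q := le_max_right _ _
    rw [Real.dist_eq] at hd1 hd2
    have hdnn : (0:ℝ) ≤ dist p q := dist_nonneg
    have hA := (hexpb u).1
    have hB := (hexpb u).2
    have hAnn : (0:ℝ) ≤ Real.exp (α * τ u) := (Real.exp_pos _).le
    have hBnn : (0:ℝ) ≤ Real.exp (-(α * τ u)) := (Real.exp_pos _).le
    apply max_le
    · rw [Real.dist_eq]
      have : (-(lam * p.1) - (c * Real.exp (α * τ u)) * p.2) -
          ((-(lam * q.1) - (c * Real.exp (α * τ u)) * q.2))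
          = -(lam * (p.1 - q.1)) - (c * Real.exp (α * τ u)) * (p.2 - q.2) := by ring
      rw [this]
      calc |(-(lam * (p.1 - q.1)) - (c * Real.exp (α * τ u)) * (p.2 - q.2))|
          ≤ |lam * (p.1 - q.1)| + |(c * Real.exp (α * τ u)) * (p.2 - q.2)| := by
            calc _ ≤ |(-(lam * (p.1 - q.1)))| + |(c * Real.exp (α * τ u)) * (p.2 - q.2)| :=
                abs_sub _ _
              _ = _ := by rw [abs_neg]
        _ = |lam| * |p.1 - q.1| + (c * Real.exp (α * τ u)) * |p.2 - q.2| := by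
            rw [abs_mul, abs_mul, abs_of_nonneg (by positivity : (0:ℝ) ≤ c * Real.exp (α * τ u))]
        _ ≤ |lam| * dist p q + (c * C) * dist p q := by
            have h1 : |lam| * |p.1 - q.1| ≤ |lam| * dist p q :=
              mul_le_mul_of_nonneg_left hd1 (abs_nonneg _)
            have h2 : (c * Real.exp (α * τ u)) * |p.2 - q.2| ≤ (c * C) * dist p q := by
              apply mul_le_mul (by nlinarith) hd2 (abs_nonneg _) (by positivity)
            linarith
        _ ≤ (|lam| + c * C + C) * dist p q := by nlinarith
    · rw [Real.dist_eq]
      have : Real.exp (-(α * τ u)) * p.1 - Real.exp (-(α * τ u)) * q.1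
          = Real.exp (-(α * τ u)) * (p.1 - q.1) := by ring
      rw [this, abs_mul, abs_of_nonneg hBnn]
      calc Real.exp (-(α * τ u)) * |p.1 - q.1| ≤ C * dist p q :=
            mul_le_mul hB hd1 (abs_nonneg _) hCpos.le
        _ ≤ (|lam| + c * C + C) * dist p q := by
            nlinarith [mul_nonneg (by positivity : (0:ℝ) ≤ |lam| + c * C) hdnn]
  -- the two solutions
  set f : ℝ → ℝ × ℝ := fun u => (x u, ∫ s in (0:ℝ)..u, Real.exp (-(α * s)) * x s) with hf
  set g : ℝ → ℝ × ℝ := fun u =>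
    (Real.exp (μ * u) * (1 + b * u), u * Real.exp (b * u)) with hg
  have hint : ∀ u : ℝ, 0 ≤ u → IntervalIntegrable (fun s => Real.exp (-(α * s)) * x s)
      volume 0 u := by
    intro u hu
    apply ContinuousOn.intervalIntegrable
    apply hconth.mono
    rw [uIcc_of_le hu]
    exact fun s hs => hs.1
  -- continuity of f on Icc 0 T
  have hfc : ContinuousOn f (Icc 0 T) := by
    apply ContinuousOn.prodMk
    · exact hcontx.mono (fun s hs => hs.1)
    · have := intervalIntegral.continuousOn_primitive_interval
        (f := fun s => Real.exp (-(α * s)) * x s) (μ := volume) (a := (0:ℝ)) (b := T) ?_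
      · exact this.mono (by rw [uIcc_of_le hT0])
      · rw [uIcc_of_le hT0]
        exact (hconth.mono (fun s hs => hs.1)).integrableOn_compact isCompact_Icc
  have hgc : ContinuousOn g (Icc 0 T) := by
    apply Continuous.continuousOn
    fun_prop
  -- derivative of f
  have hfd : ∀ u ∈ Ico (0:ℝ) T, HasDerivWithinAt f (v u (f u)) (Ici u) u := by
    intro u hu
    have huI : u ∈ Icc (0:ℝ) T := ⟨hu.1, hu.2.le⟩
    have hτu : τ u = u := hτeq u huI
    apply HasDerivWithinAt.prodMk
    · -- first component
      have h1 : HasDerivWithinAt x (x' u) (Ici u) u :=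
        (hxd u hu.1).mono (Ici_subset_Ici.2 hu.1)
      have heq : x' u = (v u (f u)).1 := by
        have h2 := hxe u hu.1
        have h3 : (∫ s in (0:ℝ)..u, (fun t => c * Real.exp (α * t)) (u - s) * x s)
            = (c * Real.exp (α * u)) * ∫ s in (0:ℝ)..u, Real.exp (-(α * s)) * x s := by
          rw [← intervalIntegral.integral_const_mul]
          apply intervalIntegral.integral_congr
          intro s _
          show c * Real.exp (α * (u - s)) * x s
            = (c * Real.exp (α * u)) * (Real.exp (-(α * s)) * x s)
          have h4 : α * (u - s) = α * u + -(α * s) := by ring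
          rw [h4, Real.exp_add]
          ring
        simp only [hv, hf, hτu]
        simp only at h2
        rw [h3] at h2
        linarith
      rw [heq] at h1
      exact h1
    · -- second component
      have hmeas : StronglyMeasurableAtFilter (fun s => Real.exp (-(α * s)) * x s)
          (nhdsWithin u (Ioi u)) volume :=
        ⟨Ici 0, Filter.mem_of_superset self_mem_nhdsWithin
          (fun s (hs : s ∈ Ioi u) => le_trans hu.1 (le_of_lt hs)),
          hconth.aestronglyMeasurable measurableSet_Ici⟩
      have hcw : ContinuousWithinAt (fun s => Real.exp (-(α * s)) * x s) (Ioi u) u :=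
        (hconth u hu.1).mono (fun s (hs : s ∈ Ioi u) => le_trans hu.1 (le_of_lt hs))
      have := intervalIntegral.integral_hasDerivWithinAt_right
        (hint u hu.1) hmeas hcw (s := Ici u) (t := Ioi u)
      have heq2 : Real.exp (-(α * u)) * x u = (v u (f u)).2 := by
        simp only [hv, hf, hτu]
      rw [heq2] at this
      exact this
  -- derivative of g
  have hαb : α + b = μ := by rw [hb, hμ]; ring
  have hμα : μ - α = b := by rw [hb, hμ]; ring
  have hgd : ∀ u ∈ Ico (0:ℝ) T, HasDerivWithinAt g (v u (g u)) (Ici u) u := by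
    intro u hu
    have huI : u ∈ Icc (0:ℝ) T := ⟨hu.1, hu.2.le⟩
    have hτu : τ u = u := hτeq u huI
    have hexp1 : Real.exp (α * u) * Real.exp (b * u) = Real.exp (μ * u) := by
      rw [← Real.exp_add, ← hαb]; ring_nf
    apply HasDerivWithinAt.prodMk
    · have h1 : HasDerivAt (fun r => Real.exp (μ * r) * (1 + b * r))
          (Real.exp (μ * u) * μ * (1 + b * u) + Real.exp (μ * u) * b) u := by
        have hexp : HasDerivAt (fun r => Real.exp (μ * r)) (Real.exp (μ * u) * μ) u := by
          simpa using ((hasDerivAt_id u).const_mul μ).exp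
        have hlin : HasDerivAt (fun r => 1 + b * r) b u := by
          simpa using ((hasDerivAt_id u).const_mul b).const_add 1
        simpa using hexp.fun_mul hlin
      have heq : Real.exp (μ * u) * μ * (1 + b * u) + Real.exp (μ * u) * b
          = (v u (g u)).1 := by
        simp only [hv, hg, hτu]
        have hlam : lam = -(μ + b) := by rw [hb, hμ]; ring
        rw [hcb, hlam, ← hexp1]
        ring
      rw [heq] at h1
      exact h1.hasDerivWithinAt
    · have h1 : HasDerivAt (fun r => r * Real.exp (b * r))
          (1 * Real.exp (b * u) + u * (Real.exp (b * u) * b)) u := by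
        have hexp : HasDerivAt (fun r => Real.exp (b * r)) (Real.exp (b * u) * b) u := by
          simpa using ((hasDerivAt_id u).const_mul b).exp
        simpa using (hasDerivAt_id u).fun_mul hexp
      have heq : 1 * Real.exp (b * u) + u * (Real.exp (b * u) * b) = (v u (g u)).2 := by
        simp only [hv, hg, hτu]
        have : Real.exp (-(α * u)) * Real.exp (μ * u) = Real.exp (b * u) := by
          rw [← Real.exp_add, ← hμα]; ring_nf
        rw [← this]
        ring
      rw [heq] at h1
      exact h1.hasDerivWithinAt
  have h00 : f 0 = g 0 := by
    simp only [hf, hg, intervalIntegral.integral_same, hx0]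
    norm_num
  have := ODE_solution_unique_of_mem_Icc_right
    (v := v) (s := fun _ => (Set.univ : Set (ℝ × ℝ))) (K := K)
    (fun u _ => (hlip u).lipschitzOnWith)
    hfc hfd (fun _ _ => trivial) hgc hgd (fun _ _ => trivial) h00
  have hfT := this ⟨hT0, le_refl T⟩
  have : x T = Real.exp (μ * T) * (1 + b * T) := congrArg Prod.fst hfT
  rw [this, hμ, hb]
  ring_nf

/-- In the zero-discriminant case: if `λ+α ≤ 0` the solution never vanishes on `(0,∞)`;
if `λ+α > 0` its unique zero in `(0,∞)` is `2/(λ+α)`. -/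
theorem stmt15 (c α lam : ℝ) (hc : 0 < c)
    (hs : (lam + α) ^ 2 - 4 * c = 0)
    (x x' : ℝ → ℝ) (hx : MemSol (fun t => c * Real.exp (α * t)) lam x x') :
    (lam + α ≤ 0 → ∀ t > (0:ℝ), x t ≠ 0) ∧
    (0 < lam + α → ∀ t > (0:ℝ), (x t = 0 ↔ t = 2 / (lam + α))) := by
  have key := memsol_repr c α lam hc hs x x' hx
  constructor
  · intro hle t ht
    rw [key t (le_of_lt ht)]
    have h1 : (0:ℝ) < 1 - (lam + α)/2 * t := by nlinarith
    positivity
  · intro hpos t ht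
    rw [key t (le_of_lt ht)]
    have hexp : Real.exp ((α - lam)/2 * t) ≠ 0 := Real.exp_ne_zero _
    rw [mul_eq_zero]
    constructor
    · rintro (h | h)
      · exact absurd h hexp
      · field_simp
        linarith
    · intro h
      right
      rw [h]
      field_simp
      norm_num
end
end

section
/- Let c > 0, α ∈ ℝ, λ ∈ ℝ, set s = (λ+α)² − 4c, and assume s < 0. Let x be the unique solution of the memory ODE with kernel M(t) = c·e^{αt} and parameter λ. Then for t > 0, x(t) = 0 if and only if there exists l ∈ ℕ (l ≥ 0) such that t = (2/√(−s))·(arccot((λ+α)/√(−s)) + l·π), where arccot y := π/2 − arctan y ∈ (0,π). -/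
noncomputable section

open Real Set MeasureTheory intervalIntegral

namespace Stmt16Helper

lemma hasDerivAt_g (β ω B t : ℝ) :
    HasDerivAt (fun t => Real.exp (-β*t) * (Real.cos (ω*t) - B * Real.sin (ω*t)))
      (Real.exp (-β*t) * (-β*(Real.cos (ω*t) - B * Real.sin (ω*t))
        + (-(ω * Real.sin (ω*t)) - B * (ω * Real.cos (ω*t))))) t := by
  have he : HasDerivAt (fun t : ℝ => Real.exp (-β*t)) (Real.exp (-β*t) * (-β * 1)) t :=
    ((hasDerivAt_id t).const_mul (-β)).exp
  have hq : HasDerivAt (fun t : ℝ => Real.cos (ω*t) - B * Real.sin (ω*t))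
      (-Real.sin (ω*t) * (ω*1) - B * (Real.cos (ω*t) * (ω*1))) t :=
    (((hasDerivAt_id t).const_mul ω).cos).sub ((((hasDerivAt_id t).const_mul ω).sin).const_mul B)
  refine (he.fun_mul hq).congr_deriv (Eq.symm ?_)
  ring

lemma hasDerivAt_g1 (β ω B t : ℝ) :
    HasDerivAt (fun t => Real.exp (-β*t) * (-β*(Real.cos (ω*t) - B * Real.sin (ω*t))
        + (-(ω * Real.sin (ω*t)) - B * (ω * Real.cos (ω*t)))))
      (-((2*β) * (Real.exp (-β*t) * (-β*(Real.cos (ω*t) - B * Real.sin (ω*t))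
          + (-(ω * Real.sin (ω*t)) - B * (ω * Real.cos (ω*t)))))
        + (β^2 + ω^2) * (Real.exp (-β*t) * (Real.cos (ω*t) - B * Real.sin (ω*t))))) t := by
  have he : HasDerivAt (fun t : ℝ => Real.exp (-β*t)) (Real.exp (-β*t) * (-β * 1)) t :=
    ((hasDerivAt_id t).const_mul (-β)).exp
  have hc : HasDerivAt (fun t : ℝ => Real.cos (ω*t)) (-Real.sin (ω*t) * (ω*1)) t :=
    ((hasDerivAt_id t).const_mul ω).cos
  have hs : HasDerivAt (fun t : ℝ => Real.sin (ω*t)) (Real.cos (ω*t) * (ω*1)) t :=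
    ((hasDerivAt_id t).const_mul ω).sin
  have hq : HasDerivAt (fun t : ℝ => -β*(Real.cos (ω*t) - B * Real.sin (ω*t))
      + (-(ω * Real.sin (ω*t)) - B * (ω * Real.cos (ω*t))))
      (-β*(-Real.sin (ω*t) * (ω*1) - B * (Real.cos (ω*t) * (ω*1)))
        + (-(ω * (Real.cos (ω*t) * (ω*1))) - B * (ω * (-Real.sin (ω*t) * (ω*1))))) t :=
    ((hc.sub (hs.const_mul B)).const_mul (-β)).add
      (((hs.const_mul ω).neg).sub ((hc.const_mul ω).const_mul B))
  refine (he.fun_mul hq).congr_deriv (Eq.symm ?_)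
  ring

end Stmt16Helper

set_option maxHeartbeats 2000000 in
/-- In the negative-discriminant case, the zeros of the solution in `(0,∞)` are exactly
`(2/√(−s))·(arccot((λ+α)/√(−s)) + lπ)`, `l ∈ ℕ`, where `arccot y = π/2 − arctan y`. -/
theorem stmt16 (c α lam : ℝ) (hc : 0 < c)
    (hs : (lam + α) ^ 2 - 4 * c < 0)
    (x x' : ℝ → ℝ) (hx : MemSol (fun t => c * Real.exp (α * t)) lam x x') :
    ∀ t > (0:ℝ),
      (x t = 0 ↔ ∃ l : ℕ,
        t = (2 / Real.sqrt (-((lam + α) ^ 2 - 4 * c))) *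
          ((Real.pi / 2 - Real.arctan ((lam + α) / Real.sqrt (-((lam + α) ^ 2 - 4 * c))))
            + l * Real.pi)) := by
  intro t ht
  obtain ⟨hx0, hx'c, hxd, hxeq⟩ := hx
  set rr := Real.sqrt (-((lam + α) ^ 2 - 4 * c)) with hrrdef
  have hrpos : 0 < rr := Real.sqrt_pos.2 (by linarith)
  have hrsq : rr ^ 2 = -((lam + α) ^ 2 - 4 * c) := Real.sq_sqrt (by linarith)
  have hrne : rr ≠ 0 := ne_of_gt hrpos
  set β := (lam - α) / 2 with hβdef
  set ω := rr / 2 with hωdef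
  set B := (lam + α) / rr with hBdef
  have hωpos : 0 < ω := by positivity
  have hsum : β ^ 2 + ω ^ 2 = c - α * lam := by
    rw [hβdef, hωdef]
    linear_combination hrsq / 4
  -- the explicit solution pair
  set g : ℝ → ℝ := fun u => Real.exp (-β*u) * (Real.cos (ω*u) - B * Real.sin (ω*u)) with hgdef
  set g1 : ℝ → ℝ := fun u => Real.exp (-β*u) * (-β*(Real.cos (ω*u) - B * Real.sin (ω*u))
      + (-(ω * Real.sin (ω*u)) - B * (ω * Real.cos (ω*u)))) with hg1def
  set h : ℝ → ℝ := fun u => -(g1 u) - lam * g u with hhdef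
  -- the memory as a function and the pair (x, y)
  have xc : ContinuousOn x (Set.Ici 0) := fun u hu => (hxd u hu).continuousWithinAt
  set F : ℝ → ℝ := fun u => ∫ s in (0:ℝ)..u, Real.exp (-(α*s)) * x s with hFdef
  set y : ℝ → ℝ := fun u => c * Real.exp (α*u) * F u with hydef
  have hker : ContinuousOn (fun s => Real.exp (-(α*s)) * x s) (Set.Ici 0) :=
    (Continuous.continuousOn (by fun_prop)).mul xc
  have hInt : ∀ u : ℝ, 0 ≤ u →
      IntervalIntegrable (fun s => Real.exp (-(α*s)) * x s) MeasureTheory.volume 0 u := by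
    intro u hu
    apply ContinuousOn.intervalIntegrable
    apply hker.mono
    rw [Set.uIcc_of_le hu]
    exact Set.Icc_subset_Ici_self
  -- derivative of F within Ici 0
  have hF : ∀ u ∈ Set.Ici (0:ℝ),
      HasDerivWithinAt F (Real.exp (-(α*u)) * x u) (Set.Ici 0) u := by
    intro u hu
    rcases eq_or_lt_of_le (Set.mem_Ici.1 hu) with rfl | hupos
    · exact intervalIntegral.integral_hasDerivWithinAt_right (t := Set.Ioi 0) (hInt 0 le_rfl)
        ((hker.stronglyMeasurableAtFilter_nhdsWithin measurableSet_Ici 0).filter_mono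
          (nhdsWithin_mono _ Set.Ioi_subset_Ici_self))
        ((hker 0 Set.self_mem_Ici).mono Set.Ioi_subset_Ici_self)
    · apply HasDerivAt.hasDerivWithinAt
      exact intervalIntegral.integral_hasDerivAt_right (hInt u (le_of_lt hupos))
        ⟨Set.Ici 0, Ici_mem_nhds hupos, hker.aestronglyMeasurable measurableSet_Ici⟩
        ((hker u hu).continuousAt (Ici_mem_nhds hupos))
  have Fc : ContinuousOn F (Set.Ici 0) := fun u hu => (hF u hu).continuousWithinAt
  have yc : ContinuousOn y (Set.Ici 0) :=
    (Continuous.continuousOn (by fun_prop)).mul Fc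
  -- the integral term in the equation is y
  have hyint : ∀ u : ℝ,
      (∫ s in (0:ℝ)..u, (fun t => c * Real.exp (α * t)) (u - s) * x s) = y u := by
    intro u
    have : ∀ s : ℝ, (fun t => c * Real.exp (α * t)) (u - s) * x s
        = (c * Real.exp (α*u)) * (Real.exp (-(α*s)) * x s) := by
      intro s
      simp only
      rw [show α * (u - s) = α * u + -(α * s) by ring, Real.exp_add]
      ring
    simp only [this]
    rw [intervalIntegral.integral_const_mul]
  -- derivative of y within Ici 0
  have hy : ∀ u ∈ Set.Ici (0:ℝ),
      HasDerivWithinAt y (c * x u + α * y u) (Set.Ici 0) u := by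
    intro u hu
    have he : HasDerivAt (fun u : ℝ => c * Real.exp (α*u)) (c * (Real.exp (α*u) * (α*1))) u :=
      (((hasDerivAt_id u).const_mul α).exp).const_mul c
    have := (he.hasDerivWithinAt.fun_mul (hF u hu))
    refine this.congr_deriv (Eq.symm ?_)
    rw [hydef]
    simp only
    rw [show c * Real.exp (α * u) * (Real.exp (-(α * u)) * x u)
        = c * (Real.exp (α * u) * Real.exp (-(α * u))) * x u by ring, ← Real.exp_add,
      show α * u + -(α * u) = 0 by ring, Real.exp_zero]
    ring
  -- the ODE for x
  have hx' : ∀ u ∈ Set.Ici (0:ℝ), x' u = -lam * x u - y u := by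
    intro u hu
    have := hxeq u hu
    rw [hyint u] at this
    linarith
  -- the linear vector field
  set L : ℝ × ℝ →L[ℝ] ℝ × ℝ :=
    ContinuousLinearMap.prod
      ((-lam) • (ContinuousLinearMap.fst ℝ ℝ ℝ) - ContinuousLinearMap.snd ℝ ℝ ℝ)
      (c • ContinuousLinearMap.fst ℝ ℝ ℝ + α • ContinuousLinearMap.snd ℝ ℝ ℝ) with hLdef
  have hLapp : ∀ p : ℝ × ℝ, L p = (-lam * p.1 - p.2, c * p.1 + α * p.2) := by
    intro p
    simp [hLdef, ContinuousLinearMap.prod_apply, smul_eq_mul]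
  -- uniqueness
  have huniq : Set.EqOn (fun u => (x u, y u)) (fun u => (g u, h u)) (Set.Icc 0 t) := by
    apply ODE_solution_unique_of_mem_Icc_right (v := fun _ p => L p)
      (s := fun _ => Set.univ) (K := ‖L‖₊)
      (fun _ _ => L.lipschitz.lipschitzOnWith)
    · exact (xc.mono Set.Icc_subset_Ici_self).prodMk (yc.mono Set.Icc_subset_Ici_self)
    · intro u hu
      have hu0 : u ∈ Set.Ici (0:ℝ) := hu.1
      have hdx : HasDerivWithinAt x (x' u) (Set.Ici u) u :=
        (hxd u hu0).mono (Set.Ici_subset_Ici.2 hu.1)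
      have hdy : HasDerivWithinAt y (c * x u + α * y u) (Set.Ici u) u :=
        (hy u hu0).mono (Set.Ici_subset_Ici.2 hu.1)
      have : HasDerivWithinAt (fun u => (x u, y u)) (x' u, c * x u + α * y u) (Set.Ici u) u :=
        hdx.prodMk hdy
      rw [hLapp]
      simp only
      rw [← hx' u hu0]
      exact this
    · intro u _; exact Set.mem_univ _
    · apply ContinuousOn.prodMk
      · exact fun u _ => ((Stmt16Helper.hasDerivAt_g β ω B u).continuousAt).continuousWithinAt
      · intro u _
        exact (((Stmt16Helper.hasDerivAt_g1 β ω B u).continuousAt).neg.sub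
          (continuousAt_const.mul
            ((Stmt16Helper.hasDerivAt_g β ω B u).continuousAt))).continuousWithinAt
    · intro u hu
      have hdg : HasDerivWithinAt g (g1 u) (Set.Ici u) u :=
        (Stmt16Helper.hasDerivAt_g β ω B u).hasDerivWithinAt
      have hdh : HasDerivWithinAt h
          (-(-((2*β) * g1 u + (β^2 + ω^2) * g u)) - lam * g1 u) (Set.Ici u) u :=
        (((Stmt16Helper.hasDerivAt_g1 β ω B u).neg).sub
          ((Stmt16Helper.hasDerivAt_g β ω B u).const_mul lam)).hasDerivWithinAt
      have hpair : HasDerivWithinAt (fun u => (g u, h u))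
          (g1 u, -(-((2*β) * g1 u + (β^2 + ω^2) * g u)) - lam * g1 u) (Set.Ici u) u :=
        hdg.prodMk hdh
      rw [hLapp]
      simp only
      refine hpair.congr_deriv (Eq.symm (Prod.ext ?_ ?_))
      · rw [hhdef]; simp only; ring
      · rw [hhdef]
        simp only
        have h2b : 2 * β = lam - α := by rw [hβdef]; ring
        linear_combination (-(g u)) * hsum - (g1 u) * h2b
    · intro u _; exact Set.mem_univ _
    · -- initial condition
      have hg0 : g 0 = 1 := by rw [hgdef]; simp
      have hg10 : g1 0 = -β - B * ω := by rw [hg1def]; simp; ring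
      have hF0 : F 0 = 0 := by rw [hFdef]; simp
      have hy0 : y 0 = 0 := by rw [hydef]; simp [hF0]
      have hh0 : h 0 = 0 := by
        rw [hhdef]
        simp only [hg10, hg0]
        rw [hβdef, hBdef, hωdef]
        field_simp
        ring
      simp only [hx0, hy0, hg0, hh0]
  have hxt : x t = g t := by
    have := huniq (Set.mem_Icc.2 ⟨le_of_lt ht, le_refl t⟩)
    exact congrArg Prod.fst this
  rw [hxt]
  -- zeros of g
  set θ := ω * t with hθdef
  have hθpos : 0 < θ := mul_pos hωpos ht
  set D := Real.sqrt (1 + B ^ 2) with hDdef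
  have hDpos : 0 < D := Real.sqrt_pos.2 (by positivity)
  have hcosadd : Real.cos (θ + Real.arctan B) = (Real.cos θ - B * Real.sin θ) / D := by
    rw [Real.cos_add, Real.cos_arctan, Real.sin_arctan, ← hDdef]
    field_simp
  have hgiff : g t = 0 ↔ Real.cos (θ + Real.arctan B) = 0 := by
    rw [hgdef]
    simp only
    rw [← hθdef, hcosadd, div_eq_zero_iff]
    constructor
    · intro hz
      rcases mul_eq_zero.1 hz with hz | hz
      · exact absurd hz (Real.exp_ne_zero _)
      · exact Or.inl hz
    · intro hz
      rcases hz with hz | hz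
      · rw [hz, mul_zero]
      · exact absurd hz (ne_of_gt hDpos)
  rw [hgiff, Real.cos_eq_zero_iff]
  constructor
  · rintro ⟨k, hk⟩
    have harc1 : Real.arctan B < Real.pi / 2 := Real.arctan_lt_pi_div_two B
    have harc2 : -(Real.pi / 2) < Real.arctan B := Real.neg_pi_div_two_lt_arctan B
    have hk0 : 0 ≤ k := by
      by_contra hneg
      push_neg at hneg
      have hk1 : (k : ℝ) ≤ -1 := by exact_mod_cast (by omega : k ≤ -1)
      have hpi := Real.pi_pos
      nlinarith [hk]
    refine ⟨k.toNat, ?_⟩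
    rw [show ((k.toNat : ℕ) : ℝ) = (k : ℝ) by exact_mod_cast Int.toNat_of_nonneg hk0]
    have ht2 : t = (2 / rr) * θ := by
      rw [hθdef, hωdef]
      field_simp
    rw [ht2]
    linear_combination (2 / rr) * hk
  · rintro ⟨l, hl⟩
    refine ⟨(l : ℤ), ?_⟩
    have : θ = (Real.pi / 2 - Real.arctan B) + l * Real.pi := by
      rw [hθdef, hl, hωdef]
      field_simp
    rw [this]
    push_cast
    ring
end
end

section
/- Let c > 0, α ∈ ℝ, λ > 0, and let x be the unique solution of the memory ODE with kernel M(t) = c·e^{αt} and parameter λ. Then for any t₁, t₂ > 0 with 0 < t₂ − t₁ < π/√c, it is not the case that both x(t₁) = 0 and x(t₂) = 0. -/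
noncomputable section

open Set MeasureTheory intervalIntegral

/-- Gronwall-type uniqueness for the constant-coefficient linear 2nd order ODE. -/
lemma gron17 (B K a b : ℝ) (z z' : ℝ → ℝ)
    (hz : ∀ t ∈ Icc a b, HasDerivWithinAt z (z' t) (Icc a b) t)
    (hz' : ∀ t ∈ Icc a b, HasDerivWithinAt z' (-B * z' t - K * z t) (Icc a b) t)
    (hza : z a = 0) (hz'a : z' a = 0) : ∀ t ∈ Icc a b, z t = 0 := by
  set C : ℝ := 1 + 2 * |B| + |K| with hC
  set G : ℝ → ℝ := fun t => (z t ^ 2 + z' t ^ 2) * Real.exp (-C * t) with hG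
  set G' : ℝ → ℝ := fun t =>
      (2 * z t * z' t + 2 * z' t * (-B * z' t - K * z t) - C * (z t ^ 2 + z' t ^ 2))
        * Real.exp (-C * t) with hG'
  have hGd : ∀ t ∈ Icc a b, HasDerivWithinAt G (G' t) (Icc a b) t := by
    intro t ht
    have h1 : HasDerivWithinAt (fun t => z t ^ 2 + z' t ^ 2)
        (2 * z t * z' t + 2 * z' t * (-B * z' t - K * z t)) (Icc a b) t := by
      have := ((hz t ht).mul (hz t ht)).add ((hz' t ht).mul (hz' t ht))
      convert this using 1
      · rfl
      · rfl
      · funext s; simp [pow_two]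
      ring
    have h2 : HasDerivWithinAt (fun t => Real.exp (-C * t))
        (Real.exp (-C * t) * (-C)) (Icc a b) t := by
      simpa using (((hasDerivAt_id t).const_mul (-C)).exp.hasDerivWithinAt)
    have := h1.mul h2
    convert this using 1
    · rfl
    · rfl
    · rfl
    simp only [hG']
    ring
  have hG'le : ∀ t, G' t ≤ 0 := by
    intro t
    have h1 : (0:ℝ) < Real.exp (-C * t) := Real.exp_pos _
    have h2 : 2 * z t * z' t + 2 * z' t * (-B * z' t - K * z t)
        - C * (z t ^ 2 + z' t ^ 2) ≤ 0 := by
      nlinarith [sq_nonneg (z t - z' t), sq_nonneg (z t + z' t), sq_nonneg (z t), sq_nonneg (z' t),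
        le_abs_self B, neg_abs_le B, le_abs_self K, neg_abs_le K,
        mul_nonneg (abs_nonneg B) (sq_nonneg (z' t)),
        mul_nonneg (abs_nonneg K) (sq_nonneg (z t - z' t)),
        mul_nonneg (abs_nonneg K) (sq_nonneg (z t + z' t))]
    exact mul_nonpos_of_nonpos_of_nonneg h2 h1.le
  have hanti : AntitoneOn G (Icc a b) := by
    apply antitoneOn_of_hasDerivWithinAt_nonpos (convex_Icc a b)
    · intro t ht
      exact (hGd t ht).continuousWithinAt
    · intro t ht
      exact (hGd t (interior_subset ht)).mono interior_subset
    · intro t _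
      exact hG'le t
  intro t ht
  have hab : a ∈ Icc a b := ⟨le_refl a, ht.1.trans ht.2⟩
  have := hanti hab ht ht.1
  have hGa : G a = 0 := by simp [hG, hza, hz'a]
  rw [hGa] at this
  simp only [hG] at this
  have h1 : (0:ℝ) < Real.exp (-C * t) := Real.exp_pos _
  have h2 : z t ^ 2 ≤ 0 := by nlinarith [sq_nonneg (z t), sq_nonneg (z' t)]
  have h3 : z t ^ 2 = 0 := le_antisymm h2 (sq_nonneg _)
  exact (pow_eq_zero_iff two_ne_zero).mp h3

def psi17 (q s : ℝ) : ℝ :=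
  if 0 < q then Real.sin (Real.sqrt q * s) / Real.sqrt q
  else if q < 0 then Real.sinh (Real.sqrt (-q) * s) / Real.sqrt (-q)
  else s

def psi17' (q s : ℝ) : ℝ :=
  if 0 < q then Real.cos (Real.sqrt q * s)
  else if q < 0 then Real.cosh (Real.sqrt (-q) * s)
  else 1

lemma psi17_zero (q : ℝ) : psi17 q 0 = 0 := by
  unfold psi17; split_ifs <;> simp

lemma psi17'_zero (q : ℝ) : psi17' q 0 = 1 := by
  unfold psi17'; split_ifs <;> simp

lemma hasDerivAt_psi17 (q s : ℝ) : HasDerivAt (psi17 q) (psi17' q s) s := by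
  rcases lt_trichotomy 0 q with h | h | h
  · have hs : Real.sqrt q ≠ 0 := ne_of_gt (Real.sqrt_pos.2 h)
    have hfun : psi17 q = fun u => Real.sin (Real.sqrt q * u) / Real.sqrt q := by
      funext u; simp [psi17, h]
    rw [hfun]
    simp only [psi17', if_pos h]
    have h1 : HasDerivAt (fun u : ℝ => Real.sqrt q * u) (Real.sqrt q) s := by
      simpa using (hasDerivAt_id s).const_mul (Real.sqrt q)
    have := h1.sin.div_const (Real.sqrt q)
    rwa [mul_div_assoc, div_self hs, mul_one] at this
  · have hq0 : q = 0 := h.symm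
    subst hq0
    have hfun : psi17 (0:ℝ) = fun u => u := by funext u; simp [psi17]
    have hfun' : psi17' (0:ℝ) s = 1 := by simp [psi17']
    rw [hfun, hfun']
    exact hasDerivAt_id s
  · have hq : ¬ (0 < q) := not_lt.2 h.le
    have hs : Real.sqrt (-q) ≠ 0 := ne_of_gt (Real.sqrt_pos.2 (by linarith))
    have hfun : psi17 q = fun u => Real.sinh (Real.sqrt (-q) * u) / Real.sqrt (-q) := by
      funext u; simp [psi17, hq, h]
    rw [hfun]
    simp only [psi17', if_neg hq, if_pos h]
    have h1 : HasDerivAt (fun u : ℝ => Real.sqrt (-q) * u) (Real.sqrt (-q)) s := by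
      simpa using (hasDerivAt_id s).const_mul (Real.sqrt (-q))
    have := h1.sinh.div_const (Real.sqrt (-q))
    rwa [mul_div_assoc, div_self hs, mul_one] at this

lemma hasDerivAt_psi17' (q s : ℝ) : HasDerivAt (psi17' q) (-q * psi17 q s) s := by
  rcases lt_trichotomy 0 q with h | h | h
  · have hs : Real.sqrt q ≠ 0 := ne_of_gt (Real.sqrt_pos.2 h)
    have hqq : Real.sqrt q * Real.sqrt q = q := Real.mul_self_sqrt h.le
    have hfun : psi17' q = fun u => Real.cos (Real.sqrt q * u) := by
      funext u; simp [psi17', h]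
    rw [hfun]
    simp only [psi17, if_pos h]
    have h1 : HasDerivAt (fun u : ℝ => Real.sqrt q * u) (Real.sqrt q) s := by
      simpa using (hasDerivAt_id s).const_mul (Real.sqrt q)
    have := h1.cos
    convert this using 1
    generalize hr : Real.sqrt q = r at hs hqq ⊢
    rw [← hqq]
    field_simp
  · have hq0 : q = 0 := h.symm
    subst hq0
    have hfun : psi17' (0:ℝ) = fun _ => (1:ℝ) := by funext u; simp [psi17']
    have h2 : -(0:ℝ) * psi17 0 s = 0 := by ring
    rw [hfun, h2]
    exact hasDerivAt_const s 1
  · have hq : ¬ (0 < q) := not_lt.2 h.le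
    have hs : Real.sqrt (-q) ≠ 0 := ne_of_gt (Real.sqrt_pos.2 (by linarith))
    have hqq : Real.sqrt (-q) * Real.sqrt (-q) = -q := Real.mul_self_sqrt (by linarith)
    have hfun : psi17' q = fun u => Real.cosh (Real.sqrt (-q) * u) := by
      funext u; simp [psi17', hq, h]
    rw [hfun]
    simp only [psi17, if_neg hq, if_pos h]
    have h1 : HasDerivAt (fun u : ℝ => Real.sqrt (-q) * u) (Real.sqrt (-q)) s := by
      simpa using (hasDerivAt_id s).const_mul (Real.sqrt (-q))
    have := h1.cosh
    convert this using 1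
    generalize hr : Real.sqrt (-q) = r at hs hqq ⊢
    rw [show q = -(r*r) by linarith]
    field_simp

lemma psi17_pos {q c T : ℝ} (hqc : q ≤ c) (hc : 0 < c) (hT : 0 < T)
    (hTc : Real.sqrt c * T < Real.pi) : 0 < psi17 q T := by
  rcases lt_trichotomy 0 q with h | h | h
  · have hs : 0 < Real.sqrt q := Real.sqrt_pos.2 h
    simp only [psi17, if_pos h]
    apply div_pos _ hs
    apply Real.sin_pos_of_pos_of_lt_pi (by positivity)
    calc Real.sqrt q * T ≤ Real.sqrt c * T :=
          mul_le_mul_of_nonneg_right (Real.sqrt_le_sqrt hqc) hT.le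
      _ < Real.pi := hTc
  · have hq0 : q = 0 := h.symm
    subst hq0
    simpa [psi17] using hT
  · have hq : ¬ (0 < q) := not_lt.2 h.le
    have hs : 0 < Real.sqrt (-q) := Real.sqrt_pos.2 (by linarith)
    simp only [psi17, if_neg hq, if_pos h]
    exact div_pos (Real.sinh_pos_iff.2 (by positivity)) hs

/-- The solution of the memory ODE with exponential kernel satisfies a second order
linear ODE with constant coefficients. -/
lemma memSol_second_deriv (c α lam : ℝ) (x x' : ℝ → ℝ)
    (hd : ∀ t ∈ Set.Ici (0:ℝ), HasDerivWithinAt x (x' t) (Set.Ici 0) t)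
    (heq : ∀ t ∈ Set.Ici (0:ℝ),
      x' t + lam * x t + ∫ s in (0:ℝ)..t, (c * Real.exp (α * (t - s))) * x s = 0) :
    ∀ t ∈ Set.Ici (0:ℝ), HasDerivWithinAt x'
      (-(lam - α) * x' t - (c - α * lam) * x t) (Set.Ici 0) t := by
  have hxc : ContinuousOn x (Set.Ici 0) := fun t ht => (hd t ht).continuousWithinAt
  set f : ℝ → ℝ := fun s => Real.exp (-(α * s)) * x s with hf
  have hfc : ContinuousOn f (Set.Ici 0) :=
    ((Real.continuous_exp.comp (continuous_const.mul continuous_id).neg).continuousOn).mul hxc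
  set J : ℝ → ℝ := fun t => ∫ s in (0:ℝ)..t, f s with hJ
  have hfint : ∀ t ∈ Set.Ici (0:ℝ), IntervalIntegrable f volume 0 t := by
    intro t ht
    apply ContinuousOn.intervalIntegrable
    apply hfc.mono
    rw [Set.uIcc_of_le ht]
    exact Set.Icc_subset_Ici_self
  have hJd : ∀ t ∈ Set.Ici (0:ℝ), HasDerivWithinAt J (f t) (Set.Ici 0) t := by
    intro t ht
    rcases eq_or_lt_of_le (Set.mem_Ici.mp ht) with h | h
    · subst h
      exact integral_hasDerivWithinAt_right (hfint 0 Set.self_mem_Ici)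
        ((hfc.mono (Set.Ioi_subset_Ici le_rfl)).stronglyMeasurableAtFilter_nhdsWithin
          measurableSet_Ioi 0)
        (hfc.continuousWithinAt Set.self_mem_Ici |>.mono (Set.Ioi_subset_Ici le_rfl))
    · have hca : ContinuousAt f t := by
        have := hfc.continuousWithinAt (le_of_lt h : (0:ℝ) ≤ t)
        rwa [continuousWithinAt_iff_continuousAt (Ici_mem_nhds h)] at this
      exact (integral_hasDerivAt_right (hfint t (le_of_lt h))
        ((ContinuousOn.stronglyMeasurableAtFilter isOpen_Ioi
          (hfc.mono (Set.Ioi_subset_Ici le_rfl))) t h) hca).hasDerivWithinAt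
  have hIJ : ∀ t ∈ Set.Ici (0:ℝ),
      (∫ s in (0:ℝ)..t, (c * Real.exp (α * (t - s))) * x s)
        = c * Real.exp (α * t) * J t := by
    intro t ht
    rw [hJ]
    rw [← intervalIntegral.integral_const_mul]
    apply intervalIntegral.integral_congr
    intro s hs
    simp only [hf]
    rw [show α * (t - s) = α * t + -(α * s) by ring, Real.exp_add]
    ring
  have hx'eq : ∀ t ∈ Set.Ici (0:ℝ),
      x' t = -(lam * x t) - c * Real.exp (α * t) * J t := by
    intro t ht
    have := heq t ht
    rw [hIJ t ht] at this
    linarith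
  intro t ht
  have hJrel : c * Real.exp (α * t) * J t = -(x' t) - lam * x t := by
    have := hx'eq t ht; linarith
  have hexp : HasDerivAt (fun t => Real.exp (α * t)) (α * Real.exp (α * t)) t := by
    simpa [mul_comm] using ((hasDerivAt_id t).const_mul α).exp
  have hgd : HasDerivWithinAt (fun t => -(lam * x t) - c * Real.exp (α * t) * J t)
      (-(lam * x' t) - (c * (α * Real.exp (α * t)) * J t + c * Real.exp (α * t) * f t))
      (Set.Ici 0) t := by
    have h1 : HasDerivWithinAt (fun t => lam * x t) (lam * x' t) (Set.Ici 0) t :=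
      (hd t ht).const_mul lam
    have h2 : HasDerivWithinAt (fun t => c * Real.exp (α * t)) (c * (α * Real.exp (α * t)))
        (Set.Ici 0) t := (hexp.const_mul c).hasDerivWithinAt
    have h3 := (h2.mul (hJd t ht))
    have := h1.neg.sub h3
    convert this using 1
    · rfl
    · rfl
    · rfl
    try ring
  have hres : HasDerivWithinAt x'
      (-(lam * x' t) - (c * (α * Real.exp (α * t)) * J t + c * Real.exp (α * t) * f t))
      (Set.Ici 0) t :=
    hgd.congr (fun s hs => hx'eq s hs) (hx'eq t ht)
  convert hres using 1
  have hfx : c * Real.exp (α * t) * f t = c * x t := by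
    simp only [hf]
    rw [Real.exp_neg]
    field_simp
  have h5 : c * (α * Real.exp (α * t)) * J t = α * (-(x' t) - lam * x t) := by
    rw [← hJrel]; ring
  rw [hfx] at hres ⊢
  linarith [h5]

/-- For the kernel `c·e^{αt}` with `c > 0` and `λ > 0`, two time instants at distance less
than `π/√c` cannot both be zeros of the solution. -/
theorem stmt17 (c α lam : ℝ) (hc : 0 < c) (hlam : 0 < lam)
    (x x' : ℝ → ℝ) (hx : MemSol (fun t => c * Real.exp (α * t)) lam x x') :
    ∀ t₁ t₂ : ℝ, 0 < t₁ → 0 < t₂ → 0 < t₂ - t₁ → t₂ - t₁ < Real.pi / Real.sqrt c →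
      ¬(x t₁ = 0 ∧ x t₂ = 0) := by
  obtain ⟨h0, _hc', hd, heq0⟩ := hx
  have heq : ∀ t ∈ Set.Ici (0:ℝ),
      x' t + lam * x t + ∫ s in (0:ℝ)..t, (c * Real.exp (α * (t - s))) * x s = 0 := by
    intro t ht
    simpa using heq0 t ht
  have hx'' := memSol_second_deriv c α lam x x' hd heq
  intro t₁ t₂ ht₁ ht₂ hdiff hlt
  rintro ⟨h1, h2⟩
  set B : ℝ := lam - α with hB
  set K : ℝ := c - α * lam with hK
  by_cases hA : x' t₁ = 0
  · -- then x ≡ 0 backwards from t₁, contradicting x 0 = 1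
    have key : ∀ s ∈ Icc (0:ℝ) t₁, x (t₁ - s) = 0 := by
      apply gron17 (-B) K 0 t₁ (fun s => x (t₁ - s)) (fun s => -x' (t₁ - s))
      · intro s hs
        have hmem : t₁ - s ∈ Set.Ici (0:ℝ) := by
          simp only [Set.mem_Ici]; linarith [hs.2]
        have hinner : HasDerivWithinAt (fun s : ℝ => t₁ - s) (-1) (Icc 0 t₁) s :=
          ((hasDerivAt_id s).const_sub t₁).hasDerivWithinAt
        have hmaps : MapsTo (fun s : ℝ => t₁ - s) (Icc 0 t₁) (Set.Ici 0) := by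
          intro u hu; simp only [Set.mem_Ici]; linarith [hu.2]
        have := (hd (t₁ - s) hmem).comp s hinner hmaps
        convert this using 1
        · rfl
        · rfl
        · rfl
        ring
      · intro s hs
        have hmem : t₁ - s ∈ Set.Ici (0:ℝ) := by
          simp only [Set.mem_Ici]; linarith [hs.2]
        have hinner : HasDerivWithinAt (fun s : ℝ => t₁ - s) (-1) (Icc 0 t₁) s :=
          ((hasDerivAt_id s).const_sub t₁).hasDerivWithinAt
        have hmaps : MapsTo (fun s : ℝ => t₁ - s) (Icc 0 t₁) (Set.Ici 0) := by
          intro u hu; simp only [Set.mem_Ici]; linarith [hu.2]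
        have hcomp := (hx'' (t₁ - s) hmem).comp s hinner hmaps
        have : HasDerivWithinAt (fun s => -x' (t₁ - s))
            (-((-B * x' (t₁ - s) - K * x (t₁ - s)) * (-1))) (Icc 0 t₁) s := hcomp.neg
        convert this using 1
        ring
      · simpa using h1
      · simpa using hA
    have := key t₁ ⟨ht₁.le, le_rfl⟩
    rw [sub_self, h0] at this
    exact one_ne_zero this
  · -- forward: x coincides with an explicit nonvanishing solution on [t₁, t₂]
    set A : ℝ := x' t₁ with hAdef
    set q : ℝ := K - B ^ 2 / 4 with hq
    set E : ℝ → ℝ := fun t => Real.exp (-(B/2) * (t - t₁)) with hE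
    set φ : ℝ → ℝ := fun t => A * (E t * psi17 q (t - t₁)) with hφdef
    set φ' : ℝ → ℝ := fun t => A * (E t * (-(B/2) * psi17 q (t - t₁) + psi17' q (t - t₁)))
      with hφ'def
    have hEd : ∀ t, HasDerivAt E (E t * (-(B/2))) t := by
      intro t
      have hlin : HasDerivAt (fun u : ℝ => -(B/2) * (u - t₁)) (-(B/2)) t := by
        simpa using ((hasDerivAt_id t).sub_const t₁).const_mul (-(B/2))
      exact hlin.exp
    have hPd : ∀ t, HasDerivAt (fun t => psi17 q (t - t₁)) (psi17' q (t - t₁)) t := by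
      intro t
      simpa [Function.comp_def] using (hasDerivAt_psi17 q (t - t₁)).comp t ((hasDerivAt_id t).sub_const t₁)
    have hP'd : ∀ t, HasDerivAt (fun t => psi17' q (t - t₁)) (-q * psi17 q (t - t₁)) t := by
      intro t
      simpa [Function.comp_def] using (hasDerivAt_psi17' q (t - t₁)).comp t ((hasDerivAt_id t).sub_const t₁)
    have hφd : ∀ t, HasDerivAt φ (φ' t) t := by
      intro t
      have := ((hEd t).mul (hPd t)).const_mul A
      convert this using 1
      · rfl
      · rfl
      · rfl
      simp only [hφ'def]
      ring
    have hφ'd : ∀ t, HasDerivAt φ' (-B * φ' t - K * φ t) t := by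
      intro t
      have hin : HasDerivAt (fun t => -(B/2) * psi17 q (t - t₁) + psi17' q (t - t₁))
          (-(B/2) * psi17' q (t - t₁) + -q * psi17 q (t - t₁)) t :=
        ((hPd t).const_mul (-(B/2))).add (hP'd t)
      have := ((hEd t).mul hin).const_mul A
      convert this using 1
      · rfl
      · rfl
      · rfl
      simp only [hφ'def, hφdef, hq]
      ring
    have hsub : Icc t₁ t₂ ⊆ Set.Ici (0:ℝ) := by
      intro u hu; simp only [Set.mem_Ici]; linarith [hu.1]
    have key : ∀ t ∈ Icc t₁ t₂, x t - φ t = 0 := by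
      apply gron17 B K t₁ t₂ (fun t => x t - φ t) (fun t => x' t - φ' t)
      · intro t ht
        exact ((hd t (hsub ht)).mono hsub).sub (hφd t).hasDerivWithinAt
      · intro t ht
        have := ((hx'' t (hsub ht)).mono hsub).sub (hφ'd t).hasDerivWithinAt
        convert this using 1
        · rfl
        · rfl
        · rfl
        ring
      · simp [hφdef, h1, psi17_zero]
      · simp [hφ'def, psi17_zero, psi17'_zero, hE, hAdef]
    have hT : t₂ ∈ Icc t₁ t₂ := ⟨by linarith, le_rfl⟩
    have hxt₂ : x t₂ = φ t₂ := by have := key t₂ hT; linarith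
    have hqc : q ≤ c := by
      simp only [hq, hK, hB]
      nlinarith [sq_nonneg (lam + α)]
    have hsc : Real.sqrt c * (t₂ - t₁) < Real.pi := by
      have hpos : 0 < Real.sqrt c := Real.sqrt_pos.2 hc
      calc Real.sqrt c * (t₂ - t₁) < Real.sqrt c * (Real.pi / Real.sqrt c) := by
            exact mul_lt_mul_of_pos_left hlt hpos
        _ = Real.pi := by field_simp
    have hψ : 0 < psi17 q (t₂ - t₁) := psi17_pos hqc hc hdiff hsc
    have hEpos : 0 < E t₂ := Real.exp_pos _
    have : φ t₂ ≠ 0 := by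
      simp only [hφdef]
      exact mul_ne_zero hA (mul_ne_zero (ne_of_gt hEpos) (ne_of_gt hψ))
    rw [h2] at hxt₂
    exact this hxt₂.symm
end
end
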